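/- arXiv:2111.07415 — 7 statements merged into one kernel-verified Lean document; each statement's English description precedes it below -/
import Mathlib

section
/- The cardinality N(m) of the LOCO code RC_m satisfies N(0) = 1, N(1) = 2, N(2) = 4, N(3) = 6, and for every m ≥ 4, N(m) = N(m−1) + N(m−3) + N(m−4). -/
/-- The RR constraint: no index `i` with `i + 2 ≤ m - 1` such that `c i = 0` and `c (i+2) = 0`
(bit `false` plays the role of `0`, bit `true` the role of `1`). -/
def RRok (m : ℕ) (c : Fin m → Bool) : Prop :=
  ∀ i j : Fin m, (j : ℕ) = (i : ℕ) + 2 → ¬(c i = false ∧ c j = false)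

instance (m : ℕ) : DecidablePred (RRok m) := fun c => by
  unfold RRok; infer_instance

/-- The LOCO code `RC_m`: all binary words of length `m` satisfying the RR constraint. -/
def RC (m : ℕ) : Finset (Fin m → Bool) := Finset.univ.filter (RRok m)

/-- `N m = |RC_m|`. -/
def N (m : ℕ) : ℕ := (RC m).card

lemma cc {n a b : ℕ} (c : Fin n → Bool) (h : a = b) (ha : a < n) (hb : b < n) :
    c ⟨a, ha⟩ = c ⟨b, hb⟩ := by subst h; rfl

lemma rrok_iff {n : ℕ} (c : Fin n → Bool) :
    RRok n c ↔ ∀ i j : ℕ, j = i + 2 → ∀ (hi : i < n) (hj : j < n),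
      ¬(c ⟨i, hi⟩ = false ∧ c ⟨j, hj⟩ = false) := by
  constructor
  · intro h i j hij hi hj; exact h ⟨i, hi⟩ ⟨j, hj⟩ hij
  · rintro h ⟨i, hi⟩ ⟨j, hj⟩ hij; exact h i j hij hi hj

lemma mem_RC {n : ℕ} (c : Fin n → Bool) : c ∈ RC n ↔ RRok n c := by simp [RC]

def dropF (d m : ℕ) {n : ℕ} (hn : d + m ≤ n) (c : Fin n → Bool) : Fin m → Bool :=
  fun i => c ⟨d + (i : ℕ), by have := i.2; omega⟩

lemma rrok_drop (d m : ℕ) {n : ℕ} (hn : d + m ≤ n) (c : Fin n → Bool) (h : RRok n c) :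
    RRok m (dropF d m hn c) := by
  rw [rrok_iff] at h ⊢
  intro i j hij hi hj hc
  exact h (d + i) (d + j) (by omega) (by omega) (by omega) hc

def addA (k : ℕ) (c : Fin (k+3) → Bool) : Fin (k+4) → Bool :=
  fun i => if h : (i : ℕ) < 1 then true else c ⟨(i : ℕ) - 1, by have := i.2; omega⟩

def addB (k : ℕ) (c : Fin (k+1) → Bool) : Fin (k+4) → Bool :=
  fun i => if h0 : (i : ℕ) = 0 then false
    else if h1 : (i : ℕ) < 3 then true else c ⟨(i : ℕ) - 3, by have := i.2; omega⟩

def addC (k : ℕ) (c : Fin k → Bool) : Fin (k+4) → Bool :=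
  fun i => if h0 : (i : ℕ) < 2 then false
    else if h1 : (i : ℕ) < 4 then true else c ⟨(i : ℕ) - 4, by have := i.2; omega⟩

lemma addA_lo (k : ℕ) (c : Fin (k+3) → Bool) (iv : ℕ) (h : iv < k+4) (h1 : iv < 1) :
    addA k c ⟨iv, h⟩ = true := by
  simp only [addA]; rw [dif_pos h1]

lemma addA_hi (k : ℕ) (c : Fin (k+3) → Bool) (iv : ℕ) (h : iv < k+4) (h1 : 1 ≤ iv) :
    addA k c ⟨iv, h⟩ = c ⟨iv - 1, by omega⟩ := by
  simp only [addA]; rw [dif_neg (by omega)]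

lemma addB_0 (k : ℕ) (c : Fin (k+1) → Bool) (iv : ℕ) (h : iv < k+4) (h1 : iv = 0) :
    addB k c ⟨iv, h⟩ = false := by
  simp only [addB]; rw [dif_pos h1]

lemma addB_1 (k : ℕ) (c : Fin (k+1) → Bool) (iv : ℕ) (h : iv < k+4) (h0 : 1 ≤ iv) (h1 : iv < 3) :
    addB k c ⟨iv, h⟩ = true := by
  simp only [addB]; rw [dif_neg (by omega), dif_pos h1]

lemma addB_2 (k : ℕ) (c : Fin (k+1) → Bool) (iv : ℕ) (h : iv < k+4) (h1 : 3 ≤ iv) :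
    addB k c ⟨iv, h⟩ = c ⟨iv - 3, by omega⟩ := by
  simp only [addB]; rw [dif_neg (by omega), dif_neg (by omega)]

lemma addC_0 (k : ℕ) (c : Fin k → Bool) (iv : ℕ) (h : iv < k+4) (h1 : iv < 2) :
    addC k c ⟨iv, h⟩ = false := by
  simp only [addC]; rw [dif_pos h1]

lemma addC_1 (k : ℕ) (c : Fin k → Bool) (iv : ℕ) (h : iv < k+4) (h0 : 2 ≤ iv) (h1 : iv < 4) :
    addC k c ⟨iv, h⟩ = true := by
  simp only [addC]; rw [dif_neg (by omega), dif_pos h1]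

lemma addC_2 (k : ℕ) (c : Fin k → Bool) (iv : ℕ) (h : iv < k+4) (h1 : 4 ≤ iv) :
    addC k c ⟨iv, h⟩ = c ⟨iv - 4, by omega⟩ := by
  simp only [addC]; rw [dif_neg (by omega), dif_neg (by omega)]

lemma rrok_addA (k : ℕ) (c : Fin (k+3) → Bool) (h : RRok (k+3) c) : RRok (k+4) (addA k c) := by
  rw [rrok_iff] at h ⊢
  intro i j hij hi hj hc
  subst hij
  obtain ⟨hc1, hc2⟩ := hc
  rcases Nat.lt_or_ge i 1 with h1 | h1
  · rw [addA_lo _ _ _ _ h1] at hc1; exact absurd hc1 (by simp)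
  · rw [addA_hi _ _ _ _ h1] at hc1
    rw [addA_hi _ _ _ _ (by omega)] at hc2
    exact h (i - 1) (i + 2 - 1) (by omega) (by omega) (by omega) ⟨hc1, hc2⟩

lemma rrok_addB (k : ℕ) (c : Fin (k+1) → Bool) (h : RRok (k+1) c) : RRok (k+4) (addB k c) := by
  rw [rrok_iff] at h ⊢
  intro i j hij hi hj hc
  subst hij
  obtain ⟨hc1, hc2⟩ := hc
  rcases Nat.lt_or_ge i 3 with h3 | h3
  · rcases Nat.lt_or_ge i 1 with h1 | h1
    · rw [addB_1 _ _ _ _ (by omega) (by omega)] at hc2; exact absurd hc2 (by simp)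
    · rw [addB_1 _ _ _ _ h1 h3] at hc1; exact absurd hc1 (by simp)
  · rw [addB_2 _ _ _ _ h3] at hc1
    rw [addB_2 _ _ _ _ (by omega)] at hc2
    exact h (i - 3) (i + 2 - 3) (by omega) (by omega) (by omega) ⟨hc1, hc2⟩

lemma rrok_addC (k : ℕ) (c : Fin k → Bool) (h : RRok k c) : RRok (k+4) (addC k c) := by
  rw [rrok_iff] at h ⊢
  intro i j hij hi hj hc
  subst hij
  obtain ⟨hc1, hc2⟩ := hc
  rcases Nat.lt_or_ge i 4 with h4 | h4
  · rcases Nat.lt_or_ge i 2 with h2 | h2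
    · rw [addC_1 _ _ _ _ (by omega) (by omega)] at hc2; exact absurd hc2 (by simp)
    · rw [addC_1 _ _ _ _ h2 h4] at hc1; exact absurd hc1 (by simp)
  · rw [addC_2 _ _ _ _ h4] at hc1
    rw [addC_2 _ _ _ _ (by omega)] at hc2
    exact h (i - 4) (i + 2 - 4) (by omega) (by omega) (by omega) ⟨hc1, hc2⟩

lemma cardA (k : ℕ) :
    ((RC (k+4)).filter (fun c => c ⟨0, by omega⟩ = true)).card = N (k+3) := by
  rw [N]
  refine Finset.card_bij' (fun c _ => dropF 1 (k+3) (by omega) c) (fun c _ => addA k c)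
    ?_ ?_ ?_ ?_
  · -- hi : maps into RC (k+3)
    intro c hc
    rw [Finset.mem_filter] at hc
    rw [mem_RC]
    exact rrok_drop 1 (k+3) (by omega) c ((mem_RC c).1 hc.1)
  · -- hj
    intro c hc
    rw [Finset.mem_filter]
    refine ⟨(mem_RC _).2 (rrok_addA k c ((mem_RC c).1 hc)), ?_⟩
    exact addA_lo k c 0 (by omega) (by omega)
  · -- left inverse
    intro c hc
    rw [Finset.mem_filter] at hc
    funext i
    beta_reduce
    rcases i with ⟨iv, hlt⟩
    rcases Nat.lt_or_ge iv 1 with h1 | h1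
    · rw [addA_lo _ _ _ _ h1]
      have : iv = 0 := by omega
      subst this
      exact hc.2.symm
    · rw [addA_hi _ _ _ _ h1]
      show c ⟨1 + (iv - 1), _⟩ = c ⟨iv, hlt⟩
      exact cc c (by omega) (by omega) hlt
  · -- right inverse
    intro c hc
    funext i
    beta_reduce
    rcases i with ⟨iv, hlt⟩
    show addA k c ⟨1 + iv, _⟩ = c ⟨iv, hlt⟩
    rw [addA_hi _ _ _ _ (by omega)]
    exact cc c (by omega) (by omega) hlt

lemma cardB (k : ℕ) :
    ((RC (k+4)).filter
      (fun c => c ⟨0, by omega⟩ = false ∧ c ⟨1, by omega⟩ = true)).card = N (k+1) := by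
  rw [N]
  refine Finset.card_bij' (fun c _ => dropF 3 (k+1) (by omega) c) (fun c _ => addB k c)
    ?_ ?_ ?_ ?_
  · intro c hc
    rw [Finset.mem_filter] at hc
    rw [mem_RC]
    exact rrok_drop 3 (k+1) (by omega) c ((mem_RC c).1 hc.1)
  · intro c hc
    rw [Finset.mem_filter]
    refine ⟨(mem_RC _).2 (rrok_addB k c ((mem_RC c).1 hc)), ?_, ?_⟩
    · exact addB_0 k c 0 (by omega) rfl
    · exact addB_1 k c 1 (by omega) (by omega) (by omega)
  · intro c hc
    rw [Finset.mem_filter] at hc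
    have h2 : c ⟨2, by omega⟩ = true := by
      have h := (rrok_iff c).1 ((mem_RC c).1 hc.1) 0 2 rfl (by omega) (by omega)
      cases hb : c ⟨2, by omega⟩ with
      | false => exact absurd ⟨hc.2.1, hb⟩ h
      | true => rfl
    funext i
    beta_reduce
    rcases i with ⟨iv, hlt⟩
    rcases Nat.lt_or_ge iv 3 with h3 | h3
    · interval_cases iv
      · rw [addB_0 _ _ _ _ rfl]; exact hc.2.1.symm
      · rw [addB_1 _ _ _ _ (by omega) (by omega)]; exact hc.2.2.symm
      · rw [addB_1 _ _ _ _ (by omega) (by omega)]; exact h2.symm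
    · rw [addB_2 _ _ _ _ h3]
      show c ⟨3 + (iv - 3), _⟩ = c ⟨iv, hlt⟩
      exact cc c (by omega) (by omega) hlt
  · intro c hc
    funext i
    beta_reduce
    rcases i with ⟨iv, hlt⟩
    show addB k c ⟨3 + iv, _⟩ = c ⟨iv, hlt⟩
    rw [addB_2 _ _ _ _ (by omega)]
    exact cc c (by omega) (by omega) hlt

lemma cardC (k : ℕ) :
    ((RC (k+4)).filter
      (fun c => c ⟨0, by omega⟩ = false ∧ c ⟨1, by omega⟩ = false)).card = N k := by
  rw [N]
  refine Finset.card_bij' (fun c _ => dropF 4 k (by omega) c) (fun c _ => addC k c)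
    ?_ ?_ ?_ ?_
  · intro c hc
    rw [Finset.mem_filter] at hc
    rw [mem_RC]
    exact rrok_drop 4 k (by omega) c ((mem_RC c).1 hc.1)
  · intro c hc
    rw [Finset.mem_filter]
    refine ⟨(mem_RC _).2 (rrok_addC k c ((mem_RC c).1 hc)), ?_, ?_⟩
    · exact addC_0 k c 0 (by omega) (by omega)
    · exact addC_0 k c 1 (by omega) (by omega)
  · intro c hc
    rw [Finset.mem_filter] at hc
    have h2 : c ⟨2, by omega⟩ = true := by
      have h := (rrok_iff c).1 ((mem_RC c).1 hc.1) 0 2 rfl (by omega) (by omega)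
      cases hb : c ⟨2, by omega⟩ with
      | false => exact absurd ⟨hc.2.1, hb⟩ h
      | true => rfl
    have h3 : c ⟨3, by omega⟩ = true := by
      have h := (rrok_iff c).1 ((mem_RC c).1 hc.1) 1 3 rfl (by omega) (by omega)
      cases hb : c ⟨3, by omega⟩ with
      | false => exact absurd ⟨hc.2.2, hb⟩ h
      | true => rfl
    funext i
    beta_reduce
    rcases i with ⟨iv, hlt⟩
    rcases Nat.lt_or_ge iv 4 with h4 | h4
    · interval_cases iv
      · rw [addC_0 _ _ _ _ (by omega)]; exact hc.2.1.symm
      · rw [addC_0 _ _ _ _ (by omega)]; exact hc.2.2.symm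
      · rw [addC_1 _ _ _ _ (by omega) (by omega)]; exact h2.symm
      · rw [addC_1 _ _ _ _ (by omega) (by omega)]; exact h3.symm
    · rw [addC_2 _ _ _ _ h4]
      show c ⟨4 + (iv - 4), _⟩ = c ⟨iv, hlt⟩
      exact cc c (by omega) (by omega) hlt
  · intro c hc
    funext i
    beta_reduce
    rcases i with ⟨iv, hlt⟩
    show addC k c ⟨4 + iv, _⟩ = c ⟨iv, hlt⟩
    rw [addC_2 _ _ _ _ (by omega)]
    exact cc c (by omega) (by omega) hlt

lemma key (k : ℕ) : N (k+4) = N (k+3) + N (k+1) + N k := by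
  have e1 : ((RC (k+4)).filter (fun c : Fin (k+4) → Bool => c ⟨0, Nat.lt_of_lt_of_le (by decide) (Nat.le_add_left 4 k)⟩ = true)).card +
      ((RC (k+4)).filter (fun c : Fin (k+4) → Bool => ¬ (c ⟨0, Nat.lt_of_lt_of_le (by decide) (Nat.le_add_left 4 k)⟩ = true))).card = (RC (k+4)).card :=
    Finset.card_filter_add_card_filter_not _
  have e2 : (((RC (k+4)).filter (fun c : Fin (k+4) → Bool => c ⟨0, Nat.lt_of_lt_of_le (by decide) (Nat.le_add_left 4 k)⟩ = false)).filter
        (fun c : Fin (k+4) → Bool => c ⟨1, Nat.lt_of_lt_of_le (by decide) (Nat.le_add_left 4 k)⟩ = true)).card +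
      (((RC (k+4)).filter (fun c : Fin (k+4) → Bool => c ⟨0, Nat.lt_of_lt_of_le (by decide) (Nat.le_add_left 4 k)⟩ = false)).filter
        (fun c : Fin (k+4) → Bool => ¬ (c ⟨1, Nat.lt_of_lt_of_le (by decide) (Nat.le_add_left 4 k)⟩ = true))).card
      = ((RC (k+4)).filter (fun c : Fin (k+4) → Bool => c ⟨0, Nat.lt_of_lt_of_le (by decide) (Nat.le_add_left 4 k)⟩ = false)).card :=
    Finset.card_filter_add_card_filter_not _
  have r1 : (RC (k+4)).filter (fun c : Fin (k+4) → Bool => ¬ (c ⟨0, Nat.lt_of_lt_of_le (by decide) (Nat.le_add_left 4 k)⟩ = true)) =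
      (RC (k+4)).filter (fun c : Fin (k+4) → Bool => c ⟨0, Nat.lt_of_lt_of_le (by decide) (Nat.le_add_left 4 k)⟩ = false) :=
    Finset.filter_congr (fun c _ => by simp)
  have r2 : ((RC (k+4)).filter (fun c : Fin (k+4) → Bool => c ⟨0, Nat.lt_of_lt_of_le (by decide) (Nat.le_add_left 4 k)⟩ = false)).filter
        (fun c : Fin (k+4) → Bool => c ⟨1, Nat.lt_of_lt_of_le (by decide) (Nat.le_add_left 4 k)⟩ = true)
      = (RC (k+4)).filter (fun c : Fin (k+4) → Bool => c ⟨0, Nat.lt_of_lt_of_le (by decide) (Nat.le_add_left 4 k)⟩ = false ∧ c ⟨1, Nat.lt_of_lt_of_le (by decide) (Nat.le_add_left 4 k)⟩ = true) :=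
    Finset.filter_filter _ _ _
  have r3 : ((RC (k+4)).filter (fun c : Fin (k+4) → Bool => c ⟨0, Nat.lt_of_lt_of_le (by decide) (Nat.le_add_left 4 k)⟩ = false)).filter
        (fun c : Fin (k+4) → Bool => ¬ (c ⟨1, Nat.lt_of_lt_of_le (by decide) (Nat.le_add_left 4 k)⟩ = true))
      = (RC (k+4)).filter (fun c : Fin (k+4) → Bool => c ⟨0, Nat.lt_of_lt_of_le (by decide) (Nat.le_add_left 4 k)⟩ = false ∧ c ⟨1, Nat.lt_of_lt_of_le (by decide) (Nat.le_add_left 4 k)⟩ = false) := by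
    rw [Finset.filter_filter]
    exact Finset.filter_congr (fun c _ => by simp)
  rw [r1] at e1
  rw [r2, r3] at e2
  rw [cardA k] at e1
  rw [cardB k, cardC k] at e2
  rw [N, ← e1, ← e2, Nat.add_assoc]

theorem stmt0 :
    N 0 = 1 ∧ N 1 = 2 ∧ N 2 = 4 ∧ N 3 = 6 ∧
    ∀ m : ℕ, 4 ≤ m → N m = N (m - 1) + N (m - 3) + N (m - 4) := by
  refine ⟨by decide, by decide, by decide, by decide, ?_⟩
  intro m hm
  obtain ⟨k, rfl⟩ : ∃ k, m = k + 4 := ⟨m - 4, by omega⟩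
  exact key k
end

section
/- For every m ≥ 4, every codeword of RC_m whose left-most two bits are 00 in fact begins with 0011 from the left, and the number of such codewords is exactly N(m−4). -/
/-- For `m ≥ 4`, every codeword of `RC_m` whose left-most two bits are `00` in fact begins
with `0011` from the left, and the number of such codewords is exactly `N (m-4)`. -/
theorem stmt3 (m : ℕ) (hm : 4 ≤ m) :
    (∀ c ∈ RC m, c ⟨m - 1, by omega⟩ = false → c ⟨m - 2, by omega⟩ = false →
      c ⟨m - 3, by omega⟩ = true ∧ c ⟨m - 4, by omega⟩ = true) ∧
    ((RC m).filter (fun c =>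
      c ⟨m - 1, by omega⟩ = false ∧ c ⟨m - 2, by omega⟩ = false)).card = N (m - 4) := by
  have key : ∀ c ∈ RC m, c ⟨m - 1, by omega⟩ = false → c ⟨m - 2, by omega⟩ = false →
      c ⟨m - 3, by omega⟩ = true ∧ c ⟨m - 4, by omega⟩ = true := by
    intro c hc h1 h2
    simp only [RC, Finset.mem_filter] at hc
    have hrr := hc.2
    constructor
    · have h := hrr ⟨m - 3, by omega⟩ ⟨m - 1, by omega⟩ (by simp; omega)
      cases hx : c ⟨m - 3, by omega⟩
      · exact absurd ⟨hx, h1⟩ h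
      · rfl
    · have h := hrr ⟨m - 4, by omega⟩ ⟨m - 2, by omega⟩ (by simp; omega)
      cases hx : c ⟨m - 4, by omega⟩
      · exact absurd ⟨hx, h2⟩ h
      · rfl
  refine ⟨key, ?_⟩
  rw [N]
  refine Finset.card_bij'
    (fun c (_ : c ∈ _) => fun i : Fin (m - 4) => c ⟨i, by omega⟩)
    (fun d (_ : d ∈ _) => fun i : Fin m =>
      if h : (i : ℕ) < m - 4 then d ⟨i, h⟩ else decide ((i : ℕ) < m - 2))
    ?_ ?_ ?_ ?_
  · -- hi : restriction lies in RC (m-4)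
    intro c hc
    simp only [RC, Finset.mem_filter, Finset.mem_univ, true_and] at hc ⊢
    intro i j hij
    exact hc.1 ⟨i, by omega⟩ ⟨j, by omega⟩ (by simpa using hij)
  · -- hj : extension lies in the filtered set
    intro d hd
    simp only [RC, Finset.mem_filter, Finset.mem_univ, true_and] at hd ⊢
    refine ⟨?_, ?_, ?_⟩
    · intro i j hij
      by_cases hj : (j : ℕ) < m - 4
      · have hi : (i : ℕ) < m - 4 := by omega
        simp only [hi, hj, dif_pos]
        exact hd ⟨i, hi⟩ ⟨j, hj⟩ (by simpa using hij)
      · by_cases hi : (i : ℕ) < m - 4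
        · have hlt : (j : ℕ) < m - 2 := by omega
          rintro ⟨-, hfalse⟩
          simp [hj, hlt] at hfalse
        · have hi2 : (i : ℕ) < m - 2 := by have := j.isLt; omega
          rintro ⟨hfalse, -⟩
          simp [hi, hi2] at hfalse
    · simp [show ¬ (m - 1 < m - 4) by omega, show ¬ (m - 1 < m - 2) by omega]
    · simp [show ¬ (m - 2 < m - 4) by omega, show ¬ (m - 2 < m - 2) by omega]
  · -- left_inv : extend (restrict c) = c
    intro c hc
    simp only [Finset.mem_filter] at hc
    obtain ⟨hcRC, h1, h2⟩ := hc
    obtain ⟨h3, h4⟩ := key c hcRC h1 h2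
    funext i
    by_cases hi : (i : ℕ) < m - 4
    · simp [hi]
    · simp only [hi, dif_neg, not_false_iff]
      have hlt := i.isLt
      have : (i : ℕ) = m - 4 ∨ (i : ℕ) = m - 3 ∨ (i : ℕ) = m - 2 ∨ (i : ℕ) = m - 1 := by omega
      rcases this with h | h | h | h
      · rw [show i = ⟨m - 4, by omega⟩ from Fin.ext h, h4]
        simp [show m - 4 < m - 2 by omega]
      · rw [show i = ⟨m - 3, by omega⟩ from Fin.ext h, h3]
        simp [show m - 3 < m - 2 by omega]
      · rw [show i = ⟨m - 2, by omega⟩ from Fin.ext h, h2]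
        simp [show ¬ (m - 2 < m - 2) by omega]
      · rw [show i = ⟨m - 1, by omega⟩ from Fin.ext h, h1]
        simp [show ¬ (m - 1 < m - 2) by omega]
  · -- right_inv
    intro d hd
    funext i
    simp
end

section
/- Let m ≥ 1 and c = c_{m−1} ⋯ c_0 ∈ RC_m, and let a_i ∈ {0, 1} be the integer value of bit c_i. For each i ∈ {0, …, m−1}, define y_{i,1} = 1 if c_i = 1, i + 2 ≤ m − 1, and c_{i+2} = 0, and y_{i,1} = 0 otherwise; define y_{i,2} = 1 if c_i = 1, i + 1 ≤ m − 1, c_{i+1} = 0, and (i + 2 > m − 1 or c_{i+2} = 1), and y_{i,2} = 0 otherwise. With the conventions N(−1) = N(−2) = 1 and N(−3) = 0, the lexicographic index of c in RC_m satisfies g(c) = Σ_{i=0}^{m−1} a_i [ (1 − y_{i,1}) N(i−2) + (1 − y_{i,1} − y_{i,2}) N(i−3) ]. -/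
/-- Lexicographic order with `0 < 1`, bit significance decreasing from position `m-1`
down to position `0`: `c'` is strictly smaller than `c`. -/
def lexLt {m : ℕ} (c' c : Fin m → Bool) : Prop :=
  ∃ k : Fin m, c' k = false ∧ c k = true ∧ ∀ j : Fin m, k < j → c' j = c j

instance (m : ℕ) (c : Fin m → Bool) : DecidablePred (fun c' => lexLt c' c) := fun c' => by
  unfold lexLt; infer_instance

/-- The lexicographic index of `c` in `RC_m`: the number of codewords strictly smaller. -/
def gIdx (m : ℕ) (c : Fin m → Bool) : ℕ := ((RC m).filter (fun c' => lexLt c' c)).card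

/-- `N` extended to integer arguments, with `N (-1) = N (-2) = 1` and `N (-3) = 0`. -/
def Ni : ℤ → ℕ := fun k => if 0 ≤ k then N k.toNat else if k = -3 then 0 else 1

namespace Stmt6

def Ext (m k : ℕ) (t : Fin m → Bool) (w : Fin k → Bool) : Fin m → Bool :=
  fun j => if h : (j : ℕ) < k then w ⟨j, h⟩ else t j

lemma Ext_lt {m k : ℕ} (t : Fin m → Bool) (w : Fin k → Bool) (j : Fin m) (h : (j:ℕ) < k) :
    Ext m k t w j = w ⟨j, h⟩ := dif_pos h

lemma Ext_ge {m k : ℕ} (t : Fin m → Bool) (w : Fin k → Bool) (j : Fin m) (h : k ≤ (j:ℕ)) :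
    Ext m k t w j = t j := dif_neg (by omega)

lemma lemA (m k : ℕ) (hk : k ≤ m) (t : Fin m → Bool) :
    ((RC m).filter (fun c' => ∀ j : Fin m, k ≤ (j:ℕ) → c' j = t j)).card
      = (Finset.univ.filter (fun w : Fin k → Bool => RRok m (Ext m k t w))).card := by
  apply Finset.card_nbij' (fun c' => fun p : Fin k => c' ⟨p, lt_of_lt_of_le p.2 hk⟩)
    (fun w => Ext m k t w)
  · intro c' hc'
    simp only [Finset.mem_coe, Finset.mem_filter, Finset.mem_univ, true_and] at hc' ⊢
    have he : Ext m k t (fun p : Fin k => c' ⟨p, lt_of_lt_of_le p.2 hk⟩) = c' := by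
      funext j
      by_cases h : (j:ℕ) < k
      · rw [Ext_lt _ _ _ h]
      · rw [Ext_ge _ _ _ (by omega)]
        exact (hc'.2 j (by omega)).symm
    rw [he]
    rw [RC, Finset.mem_filter] at hc'
    exact hc'.1.2
  · intro w hw
    simp only [Finset.mem_coe, Finset.mem_filter, Finset.mem_univ, true_and] at hw ⊢
    constructor
    · rw [RC, Finset.mem_filter]
      exact ⟨Finset.mem_univ _, hw⟩
    · intro j hj
      exact Ext_ge _ _ _ hj
  · intro c' hc'
    simp only [Finset.mem_coe, Finset.mem_filter] at hc'
    funext j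
    beta_reduce
    by_cases h : (j:ℕ) < k
    · rw [Ext_lt _ _ _ h]
    · rw [Ext_ge _ _ _ (by omega)]
      exact (hc'.2 j (by omega)).symm
  · intro w _
    funext p
    beta_reduce
    rw [Ext_lt t w _ (show ((⟨(p:ℕ), lt_of_lt_of_le p.2 hk⟩ : Fin m):ℕ) < k from p.2)]

lemma restrict {k n : ℕ} (hn : n ≤ k) {t : Fin k → Bool} {w : Fin n → Bool}
    (h : RRok k (Ext k n t w)) : RRok n w := by
  intro i j hij
  have h2 := h ⟨i, by omega⟩ ⟨j, by omega⟩ (by simpa using hij)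
  rw [Ext_lt _ _ _ (show ((⟨(i:ℕ), by omega⟩ : Fin k):ℕ) < n from i.2),
      Ext_lt _ _ _ (show ((⟨(j:ℕ), by omega⟩ : Fin k):ℕ) < n from j.2)] at h2
  simpa using h2

lemma trans (k n : ℕ) (hn : n ≤ k) (t : Fin k → Bool) (w : Fin n → Bool)
    (hup : ∀ i j : Fin k, (j:ℕ) = (i:ℕ) + 2 → n ≤ (i:ℕ) → ¬(t i = false ∧ t j = false))
    (hcross : ∀ j : Fin k, n ≤ (j:ℕ) → (j:ℕ) < n + 2 → t j = true) :
    RRok k (Ext k n t w) ↔ RRok n w := by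
  constructor
  · exact restrict hn
  · intro h i j hij hbad
    obtain ⟨h1, h2⟩ := hbad
    by_cases hj : (j:ℕ) < n
    · have hi : (i:ℕ) < n := by omega
      rw [Ext_lt _ _ _ hi] at h1
      rw [Ext_lt _ _ _ hj] at h2
      exact h ⟨i, hi⟩ ⟨j, hj⟩ (by simpa using hij) ⟨h1, h2⟩
    · by_cases hi : (i:ℕ) < n
      · rw [Ext_ge _ _ _ (by omega)] at h2
        rw [hcross j (by omega) (by omega)] at h2
        simp at h2
      · rw [Ext_ge _ _ _ (by omega)] at h1 h2
        exact hup i j hij (by omega) ⟨h1, h2⟩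


lemma Ni_nat (n : ℕ) : Ni (n : ℤ) = N n := by simp [Ni]

lemma L2 (k : ℕ) :
    (Finset.univ.filter (fun w : Fin k → Bool => RRok k w ∧
        (∀ p : Fin k, (p:ℕ) + 2 = k → w p = true) ∧
        (∀ p : Fin k, (p:ℕ) + 1 = k → w p = true))).card = Ni ((k:ℤ) - 2) := by
  match k with
  | 0 => decide
  | 1 => decide
  | (n+2) =>
    have hset : Finset.univ.filter (fun w : Fin (n+2) → Bool => RRok (n+2) w ∧
        (∀ p : Fin (n+2), (p:ℕ) + 2 = n+2 → w p = true) ∧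
        (∀ p : Fin (n+2), (p:ℕ) + 1 = n+2 → w p = true))
        = (RC (n+2)).filter (fun w => ∀ j : Fin (n+2), n ≤ (j:ℕ) → w j = (fun _ => true) j) := by
      rw [RC, Finset.filter_filter]
      apply Finset.filter_congr
      intro w _
      simp only [eq_iff_iff]
      constructor
      · rintro ⟨h0, h1, h2⟩
        refine ⟨h0, ?_⟩
        intro j hj
        rcases (show (j:ℕ) = n ∨ (j:ℕ) = n+1 by omega) with h | h
        · exact h1 j (by omega)
        · exact h2 j (by omega)
      · rintro ⟨h0, h⟩
        exact ⟨h0, fun p hp => h p (by omega), fun p hp => h p (by omega)⟩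
    rw [hset, lemA _ n (by omega) _]
    have hiff : ∀ w : Fin n → Bool,
        RRok (n+2) (Ext (n+2) n (fun _ => true) w) ↔ RRok n w := fun w =>
      trans _ _ (by omega) _ _ (by simp) (by simp)
    have : Finset.univ.filter (fun w : Fin n → Bool => RRok (n+2) (Ext (n+2) n (fun _ => true) w))
        = Finset.univ.filter (RRok n) := by
      apply Finset.filter_congr
      intro w _
      simp [hiff w]
    rw [this]
    have : ((n:ℤ) + 2 - 2) = (n:ℤ) := by ring
    rw [show ((n+2:ℕ):ℤ) - 2 = (n:ℤ) by push_cast; ring, Ni_nat]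
    rfl

lemma L1 (k : ℕ) :
    (Finset.univ.filter (fun w : Fin k → Bool => RRok k w ∧
        (∀ p : Fin k, (p:ℕ) + 2 = k → w p = true))).card
      = Ni ((k:ℤ) - 2) + Ni ((k:ℤ) - 3) := by
  match k with
  | 0 => decide
  | 1 => decide
  | (n+2) =>
    rw [← Finset.card_filter_add_card_filter_not
      (p := fun w : Fin (n+2) → Bool => w ⟨n+1, by omega⟩ = true)
      (s := Finset.univ.filter (fun w : Fin (n+2) → Bool => RRok (n+2) w ∧
        (∀ p : Fin (n+2), (p:ℕ) + 2 = n+2 → w p = true)))]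
    congr 1
    · -- top bit true: equals the L2 set
      rw [Finset.filter_filter]
      have hset : Finset.univ.filter (fun w : Fin (n+2) → Bool =>
            (RRok (n+2) w ∧ (∀ p : Fin (n+2), (p:ℕ) + 2 = n+2 → w p = true)) ∧
              w ⟨n+1, by omega⟩ = true)
          = Finset.univ.filter (fun w : Fin (n+2) → Bool => RRok (n+2) w ∧
              (∀ p : Fin (n+2), (p:ℕ) + 2 = n+2 → w p = true) ∧
              (∀ p : Fin (n+2), (p:ℕ) + 1 = n+2 → w p = true)) := by
        apply Finset.filter_congr
        intro w _
        constructor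
        · rintro ⟨⟨h0, h1⟩, h2⟩
          refine ⟨h0, h1, ?_⟩
          intro p hp
          have : p = ⟨n+1, by omega⟩ := by
            apply Fin.ext; simp; omega
          rw [this]; exact h2
        · rintro ⟨h0, h1, h2⟩
          exact ⟨⟨h0, h1⟩, h2 ⟨n+1, by omega⟩ (by simp)⟩
      rw [hset, L2]
    · -- top bit false
      match n with
      | 0 => decide
      | (q+1) =>
        rw [Finset.filter_filter]
        show (Finset.univ.filter (fun w : Fin (q+3) → Bool =>
              (RRok (q+3) w ∧ (∀ p : Fin (q+3), (p:ℕ) + 2 = q+3 → w p = true)) ∧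
                ¬ w ⟨q+2, by omega⟩ = true)).card = Ni (((q+3:ℕ):ℤ) - 3)
        have hset : Finset.univ.filter (fun w : Fin (q+3) → Bool =>
              (RRok (q+3) w ∧ (∀ p : Fin (q+3), (p:ℕ) + 2 = q+3 → w p = true)) ∧
                ¬ w ⟨q+2, by omega⟩ = true)
            = (RC (q+3)).filter (fun w => ∀ j : Fin (q+3), q ≤ (j:ℕ) →
                w j = (fun j : Fin (q+3) => decide ((j:ℕ) < q+2)) j) := by
          rw [RC, Finset.filter_filter]
          apply Finset.filter_congr
          intro w _
          constructor
          · rintro ⟨⟨h0, h1⟩, h2⟩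
            refine ⟨h0, ?_⟩
            intro j hj
            have h2' : w ⟨q+2, by omega⟩ = false := by
              cases hval : w ⟨q+2, by omega⟩
              · rfl
              · exact absurd hval h2
            rcases (show (j:ℕ) = q ∨ (j:ℕ) = q+1 ∨ (j:ℕ) = q+2 by omega) with h | h | h
            · have hq : w ⟨q, by omega⟩ = true := by
                cases hval : w ⟨q, by omega⟩
                · exact absurd ⟨hval, h2'⟩ (h0 ⟨q, by omega⟩ ⟨q+2, by omega⟩ (by simp))
                · rfl
              have : j = (⟨q, by omega⟩ : Fin (q+3)) := by apply Fin.ext; simpa using h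
              rw [this, hq]
              simp
            · have : j = (⟨q+1, by omega⟩ : Fin (q+3)) := by apply Fin.ext; simpa using h
              rw [this, h1 _ (by simp)]
              simp
            · have : j = (⟨q+2, by omega⟩ : Fin (q+3)) := by apply Fin.ext; simpa using h
              rw [this, h2']
              simp
          · rintro ⟨h0, h⟩
            refine ⟨⟨h0, ?_⟩, ?_⟩
            · intro p hp
              rw [h p (by omega)]
              simp only [decide_eq_true_eq]
              omega
            · rw [h ⟨q+2, by omega⟩ (by simp)]
              simp
        rw [hset, lemA _ q (by omega) _]
        have hiff : ∀ w : Fin q → Bool,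
            RRok (q+3) (Ext (q+3) q (fun j : Fin (q+3) => decide ((j:ℕ) < q+2)) w) ↔ RRok q w := by
          intro w
          apply trans _ _ (by omega)
          · intro i j hij hi hbad
            have : (i:ℕ) = q := by have := j.2; omega
            have : decide ((i:ℕ) < q+2) = true := by simp; omega
            rw [this] at hbad
            exact absurd hbad.1 (by simp)
          · intro j hj1 hj2
            simp only [decide_eq_true_eq]
            omega
        have : Finset.univ.filter (fun w : Fin q → Bool =>
              RRok (q+3) (Ext (q+3) q (fun j : Fin (q+3) => decide ((j:ℕ) < q+2)) w))
            = Finset.univ.filter (RRok q) := by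
          apply Finset.filter_congr
          intro w _
          simp [hiff w]
        rw [this, show ((q+3:ℕ):ℤ) - 3 = (q:ℤ) by push_cast; ring]
        rw [Ni_nat]
        rfl

def T (m : ℕ) (c : Fin m → Bool) (i : Fin m) : Finset (Fin m → Bool) :=
  (RC m).filter (fun c' => c i = true ∧ c' i = false ∧ ∀ j : Fin m, i < j → c' j = c j)

lemma decomp (m : ℕ) (c : Fin m → Bool) : gIdx m c = ∑ i : Fin m, (T m c i).card := by
  unfold gIdx
  have hU : (RC m).filter (fun c' => lexLt c' c) = Finset.univ.biUnion (T m c) := by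
    ext c'
    simp only [Finset.mem_filter, Finset.mem_biUnion, Finset.mem_univ, true_and]
    constructor
    · rintro ⟨h1, k, hk1, hk2, hk3⟩
      exact ⟨k, Finset.mem_filter.mpr ⟨h1, hk2, hk1, hk3⟩⟩
    · rintro ⟨k, hk⟩
      obtain ⟨h1, h2, h3, h4⟩ := Finset.mem_filter.mp hk
      exact ⟨h1, k, h3, h2, h4⟩
  rw [hU, Finset.card_biUnion]
  have key : ∀ i k : Fin m, i < k → Disjoint (T m c i) (T m c k) := by
    intro i k h
    rw [Finset.disjoint_left]
    intro x hxi hxk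
    obtain ⟨_, _, _, hagree⟩ := Finset.mem_filter.mp hxi
    obtain ⟨_, hck, hxk0, _⟩ := Finset.mem_filter.mp hxk
    have := hagree k h
    rw [hxk0, hck] at this
    exact absurd this (by simp)
  intro i _ k _ hik
  rcases lt_or_gt_of_ne hik with h | h
  · exact key i k h
  · exact (key k i h).symm

lemma Tcard (m : ℕ) (c : Fin m → Bool) (hc : c ∈ RC m) (i : Fin m) :
    ((T m c i).card : ℤ) =
      (if c i = true then (1 : ℤ) else 0) *
        ((1 - (if c i = true ∧ ∃ h : (i : ℕ) + 2 < m, c ⟨(i : ℕ) + 2, h⟩ = false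
                then (1 : ℤ) else 0)) * (Ni ((i : ℤ) - 2) : ℤ)
         + (1 - (if c i = true ∧ ∃ h : (i : ℕ) + 2 < m, c ⟨(i : ℕ) + 2, h⟩ = false
                  then (1 : ℤ) else 0)
              - (if c i = true ∧ (∃ h : (i : ℕ) + 1 < m, c ⟨(i : ℕ) + 1, h⟩ = false) ∧
                    (∀ h : (i : ℕ) + 2 < m, c ⟨(i : ℕ) + 2, h⟩ = true)
                  then (1 : ℤ) else 0)) * (Ni ((i : ℤ) - 3) : ℤ)) := by
  by_cases hci : c i = true
  case neg =>
    have hT : T m c i = ∅ := by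
      apply Finset.filter_false_of_mem
      intro x _ hx
      exact hci hx.1
    rw [hT, if_neg hci]
    simp
  case pos =>
    have hRRc : RRok m c := (Finset.mem_filter.mp hc).2
    have ht_i : Function.update c i false i = false := Function.update_self i false c
    have ht_ne : ∀ j : Fin m, j ≠ i → Function.update c i false j = c j :=
      fun j h => Function.update_of_ne h false c
    have hT : T m c i = (RC m).filter
        (fun c' => ∀ j : Fin m, (i:ℕ) ≤ (j:ℕ) → c' j = Function.update c i false j) := by
      unfold T
      apply Finset.filter_congr
      intro c' _
      constructor
      · rintro ⟨_, h2, h3⟩ j hj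
        by_cases hji : j = i
        · rw [hji, ht_i]
          exact h2
        · rw [ht_ne j hji]
          have : (j:ℕ) ≠ (i:ℕ) := fun h => hji (Fin.ext h)
          exact h3 j (by rw [Fin.lt_def]; omega)
      · intro h
        refine ⟨hci, ?_, ?_⟩
        · have := h i (le_refl _)
          rwa [ht_i] at this
        · intro j hj
          have := h j (le_of_lt hj)
          rwa [ht_ne j (by intro he; rw [he] at hj; exact lt_irrefl i hj)] at this
    rw [if_pos hci, one_mul, hT, lemA m i (le_of_lt i.2) _]
    by_cases hY1 : ∃ h : (i:ℕ)+2 < m, c ⟨(i:ℕ)+2, h⟩ = false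
    · -- first branch: T i is empty
      obtain ⟨h2m, hc2⟩ := hY1
      have hempty : Finset.univ.filter
          (fun w : Fin (i:ℕ) → Bool => RRok m (Ext m i (Function.update c i false) w)) = ∅ := by
        apply Finset.filter_false_of_mem
        intro w _ hR
        apply hR i ⟨(i:ℕ)+2, h2m⟩ rfl
        constructor
        · rw [Ext_ge _ _ _ (le_refl _)]
          exact ht_i
        · rw [Ext_ge _ _ _ (show (i:ℕ) ≤ (((⟨(i:ℕ)+2, h2m⟩ : Fin m)):ℕ) by simp)]
          rw [ht_ne _ (Fin.ne_of_val_ne (by simp))]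
          exact hc2
      have hy2 : ¬(c i = true ∧ (∃ h : (i:ℕ)+1 < m, c ⟨(i:ℕ)+1, h⟩ = false) ∧
          (∀ h : (i:ℕ)+2 < m, c ⟨(i:ℕ)+2, h⟩ = true)) := by
        rintro ⟨_, _, hall⟩
        rw [hall h2m] at hc2
        exact absurd hc2 (by simp)
      rw [hempty, if_pos ⟨hci, h2m, hc2⟩, if_neg hy2]
      simp only [Finset.card_empty, Nat.cast_zero]
      ring
    · have hC3 : ∀ h : (i:ℕ)+2 < m, c ⟨(i:ℕ)+2, h⟩ = true := by
        intro h
        cases hval : c ⟨(i:ℕ)+2, h⟩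
        · exact absurd ⟨h, hval⟩ hY1
        · rfl
      rw [if_neg (fun hx => hY1 hx.2)]
      by_cases hY2 : ∃ h : (i:ℕ)+1 < m, c ⟨(i:ℕ)+1, h⟩ = false
      · -- second branch: y2 = 1
        obtain ⟨h1m, hc1⟩ := hY2
        have hfc : Finset.univ.filter
            (fun w : Fin (i:ℕ) → Bool => RRok m (Ext m i (Function.update c i false) w))
            = Finset.univ.filter (fun w : Fin (i:ℕ) → Bool => RRok i w ∧
                (∀ p : Fin (i:ℕ), (p:ℕ) + 2 = (i:ℕ) → w p = true) ∧
                (∀ p : Fin (i:ℕ), (p:ℕ) + 1 = (i:ℕ) → w p = true)) := by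
          apply Finset.filter_congr
          intro w _
          constructor
          · intro h
            refine ⟨restrict (le_of_lt i.2) h, ?_, ?_⟩
            · intro p hp
              have hpm : (p:ℕ) < m := lt_trans p.2 i.2
              have h2 := h ⟨(p:ℕ), hpm⟩ i (by simp [← hp])
              rw [Ext_lt _ _ (⟨(p:ℕ), hpm⟩ : Fin m) p.2, Ext_ge _ _ _ (le_refl _), ht_i] at h2
              simp only [Fin.eta] at h2
              cases hval : w p
              · exact absurd ⟨hval, trivial⟩ h2
              · rfl
            · intro p hp
              have hpm : (p:ℕ) < m := lt_trans p.2 i.2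
              have h2 := h ⟨(p:ℕ), hpm⟩ ⟨(i:ℕ)+1, h1m⟩ (by simp [← hp])
              rw [Ext_lt _ _ (⟨(p:ℕ), hpm⟩ : Fin m) p.2,
                  Ext_ge _ _ (⟨(i:ℕ)+1, h1m⟩ : Fin m) (by simp),
                  ht_ne _ (Fin.ne_of_val_ne (by simp)), hc1] at h2
              simp only [Fin.eta] at h2
              cases hval : w p
              · exact absurd ⟨hval, trivial⟩ h2
              · rfl
          · rintro ⟨hw, h2c, h3c⟩ a b hab ⟨hb1, hb2⟩
            have hbm := b.2
            by_cases hblt : (b:ℕ) < (i:ℕ)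
            · have ha : (a:ℕ) < (i:ℕ) := by omega
              rw [Ext_lt _ _ _ ha] at hb1
              rw [Ext_lt _ _ _ hblt] at hb2
              exact hw ⟨(a:ℕ), ha⟩ ⟨(b:ℕ), hblt⟩ (by simpa using hab) ⟨hb1, hb2⟩
            · by_cases hbe : (b:ℕ) = (i:ℕ)
              · have ha : (a:ℕ) < (i:ℕ) := by omega
                have := h2c ⟨(a:ℕ), ha⟩ (by simp; omega)
                rw [Ext_lt _ _ _ ha, this] at hb1
                exact absurd hb1 (by simp)
              · by_cases hbe1 : (b:ℕ) = (i:ℕ)+1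
                · have ha : (a:ℕ) < (i:ℕ) := by omega
                  have := h3c ⟨(a:ℕ), ha⟩ (by simp; omega)
                  rw [Ext_lt _ _ _ ha, this] at hb1
                  exact absurd hb1 (by simp)
                · by_cases hbe2 : (b:ℕ) = (i:ℕ)+2
                  · have pf : (i:ℕ)+2 < m := by omega
                    have hbb : b = ⟨(i:ℕ)+2, pf⟩ := Fin.ext hbe2
                    rw [Ext_ge _ _ _ (by omega), ht_ne b (Fin.ne_of_val_ne (by omega)), hbb] at hb2
                    exact absurd hb2 (by simp [hC3 pf])
                  · rw [Ext_ge _ _ _ (by omega), ht_ne a (Fin.ne_of_val_ne (by omega))] at hb1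
                    rw [Ext_ge _ _ _ (by omega), ht_ne b (Fin.ne_of_val_ne (by omega))] at hb2
                    exact hRRc a b hab ⟨hb1, hb2⟩
        rw [hfc, L2 (i:ℕ), if_pos ⟨hci, ⟨h1m, hc1⟩, hC3⟩]
        push_cast
        ring
      · -- third branch: y1 = y2 = 0
        have hC2 : ∀ h : (i:ℕ)+1 < m, c ⟨(i:ℕ)+1, h⟩ = true := by
          intro h
          cases hval : c ⟨(i:ℕ)+1, h⟩
          · exact absurd ⟨h, hval⟩ hY2
          · rfl
        have hfc : Finset.univ.filter
            (fun w : Fin (i:ℕ) → Bool => RRok m (Ext m i (Function.update c i false) w))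
            = Finset.univ.filter (fun w : Fin (i:ℕ) → Bool => RRok i w ∧
                (∀ p : Fin (i:ℕ), (p:ℕ) + 2 = (i:ℕ) → w p = true)) := by
          apply Finset.filter_congr
          intro w _
          constructor
          · intro h
            refine ⟨restrict (le_of_lt i.2) h, ?_⟩
            intro p hp
            have hpm : (p:ℕ) < m := lt_trans p.2 i.2
            have h2 := h ⟨(p:ℕ), hpm⟩ i (by simp [← hp])
            rw [Ext_lt _ _ (⟨(p:ℕ), hpm⟩ : Fin m) p.2, Ext_ge _ _ _ (le_refl _), ht_i] at h2
            simp only [Fin.eta] at h2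
            cases hval : w p
            · exact absurd ⟨hval, trivial⟩ h2
            · rfl
          · rintro ⟨hw, h2c⟩ a b hab ⟨hb1, hb2⟩
            have hbm := b.2
            by_cases hblt : (b:ℕ) < (i:ℕ)
            · have ha : (a:ℕ) < (i:ℕ) := by omega
              rw [Ext_lt _ _ _ ha] at hb1
              rw [Ext_lt _ _ _ hblt] at hb2
              exact hw ⟨(a:ℕ), ha⟩ ⟨(b:ℕ), hblt⟩ (by simpa using hab) ⟨hb1, hb2⟩
            · by_cases hbe : (b:ℕ) = (i:ℕ)
              · have ha : (a:ℕ) < (i:ℕ) := by omega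
                have := h2c ⟨(a:ℕ), ha⟩ (by simp; omega)
                rw [Ext_lt _ _ _ ha, this] at hb1
                exact absurd hb1 (by simp)
              · by_cases hbe1 : (b:ℕ) = (i:ℕ)+1
                · have pf : (i:ℕ)+1 < m := by omega
                  have hbb : b = ⟨(i:ℕ)+1, pf⟩ := Fin.ext hbe1
                  rw [Ext_ge _ _ _ (by omega), ht_ne b (Fin.ne_of_val_ne (by omega)), hbb] at hb2
                  exact absurd hb2 (by simp [hC2 pf])
                · by_cases hbe2 : (b:ℕ) = (i:ℕ)+2
                  · have pf : (i:ℕ)+2 < m := by omega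
                    have hbb : b = ⟨(i:ℕ)+2, pf⟩ := Fin.ext hbe2
                    rw [Ext_ge _ _ _ (by omega), ht_ne b (Fin.ne_of_val_ne (by omega)), hbb] at hb2
                    exact absurd hb2 (by simp [hC3 pf])
                  · rw [Ext_ge _ _ _ (by omega), ht_ne a (Fin.ne_of_val_ne (by omega))] at hb1
                    rw [Ext_ge _ _ _ (by omega), ht_ne b (Fin.ne_of_val_ne (by omega))] at hb2
                    exact hRRc a b hab ⟨hb1, hb2⟩
        have hy2 : ¬(c i = true ∧ (∃ h : (i:ℕ)+1 < m, c ⟨(i:ℕ)+1, h⟩ = false) ∧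
            (∀ h : (i:ℕ)+2 < m, c ⟨(i:ℕ)+2, h⟩ = true)) := fun hx => hY2 hx.2.1
        rw [hfc, L1 (i:ℕ), if_neg hy2]
        push_cast
        ring

end Stmt6

/-- The encoding-decoding rule:
`g(c) = Σ_i a_i [(1 - y_{i,1}) N(i-2) + (1 - y_{i,1} - y_{i,2}) N(i-3)]`. -/



theorem stmt6 (m : ℕ) (hm : 1 ≤ m) (c : Fin m → Bool) (hc : c ∈ RC m) :
    (gIdx m c : ℤ) =
      ∑ i : Fin m,
        (if c i = true then (1 : ℤ) else 0) *
          ((1 - (if c i = true ∧ ∃ h : (i : ℕ) + 2 < m, c ⟨(i : ℕ) + 2, h⟩ = false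
                  then (1 : ℤ) else 0)) * (Ni ((i : ℤ) - 2) : ℤ)
           + (1 - (if c i = true ∧ ∃ h : (i : ℕ) + 2 < m, c ⟨(i : ℕ) + 2, h⟩ = false
                    then (1 : ℤ) else 0)
                - (if c i = true ∧ (∃ h : (i : ℕ) + 1 < m, c ⟨(i : ℕ) + 1, h⟩ = false) ∧
                      (∀ h : (i : ℕ) + 2 < m, c ⟨(i : ℕ) + 2, h⟩ = true)
                    then (1 : ℤ) else 0)) * (Ni ((i : ℤ) - 3) : ℤ)) := by
  rw [Stmt6.decomp m c, Nat.cast_sum]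
  exact Finset.sum_congr rfl (fun i _ => Stmt6.Tcard m c hc i)
end

section
/- For every i ≥ 3, the contribution counts used in the encoding-decoding rule hold: the number of codewords of RC_{i+1} whose left-most bit is 0 equals N(i−2) + N(i−3), the number of codewords of RC_{i+2} whose left-most two bits are 00 equals N(i−2), and the number of codewords of RC_{i+3} beginning with 000 from the left, as well as the number beginning with 010 from the left, equals 0. -/
lemma master (n m : ℕ) (h1 : n + 2 ≤ m) (h2 : m ≤ n + 4) :
    ((RC m).filter
      (fun c => ∀ p : Fin m, n ≤ (p : ℕ) → c p = decide ((p : ℕ) ≤ n + 1))).card = N n := by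
  unfold N
  apply Finset.card_nbij' (fun c (k : Fin n) => c ⟨(k : ℕ), by omega⟩)
    (fun d (p : Fin m) => if h : (p : ℕ) < n then d ⟨(p : ℕ), h⟩ else decide ((p : ℕ) ≤ n + 1))
  · intro c hc
    simp only [Finset.mem_coe, Finset.mem_filter, RC, Finset.mem_univ, true_and] at hc ⊢
    intro a b hab
    exact hc.1 ⟨(a : ℕ), by omega⟩ ⟨(b : ℕ), by omega⟩ (by simpa using hab)
  · intro d hd
    simp only [Finset.mem_coe, Finset.mem_filter, RC, Finset.mem_univ, true_and] at hd ⊢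
    constructor
    · intro a b hab
      by_cases ha : (a : ℕ) < n
      · by_cases hb : (b : ℕ) < n
        · simp only [dif_pos ha, dif_pos hb]
          exact hd ⟨(a : ℕ), ha⟩ ⟨(b : ℕ), hb⟩ (by simpa using hab)
        · simp only [dif_pos ha, dif_neg hb]
          rintro ⟨-, h2'⟩
          simp only [decide_eq_false_iff_not, not_le] at h2'
          omega
      · simp only [dif_neg ha]
        rintro ⟨h1', -⟩
        simp only [decide_eq_false_iff_not, not_le] at h1'
        omega
    · intro p hp
      simp [dif_neg (by omega : ¬ (p : ℕ) < n)]
  · intro c hc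
    simp only [Finset.mem_coe, Finset.mem_filter, RC, Finset.mem_univ, true_and] at hc
    funext p
    by_cases hpn : (p : ℕ) < n
    · simp only [dif_pos hpn]
    · simp only [dif_neg hpn]
      exact (hc.2 p (by omega)).symm
  · intro d hd
    funext k
    simp [dif_pos k.2]

lemma force {m : ℕ} (c : Fin m → Bool) (hc : RRok m c) (a : ℕ) (ha : a + 2 < m)
    (h2 : c ⟨a + 2, ha⟩ = false) : c ⟨a, by omega⟩ = true := by
  cases h : c ⟨a, by omega⟩
  · exact absurd ⟨h, h2⟩ (hc _ _ rfl)
  · rfl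

lemma lemA (j : ℕ) : (((RC (j + 3 + 1)).filter (fun c => c ⟨j + 3, by omega⟩ = false)).filter
    (fun c => c ⟨j + 2, by omega⟩ = true)).card = N (j + 1) := by
  rw [Finset.filter_filter, ← master (j + 1) (j + 4) (by omega) (by omega)]
  refine congrArg Finset.card (Finset.filter_congr ?_)
  intro c hc
  simp only [RC, Finset.mem_filter, Finset.mem_univ, true_and] at hc
  constructor
  · rintro ⟨h3, h2⟩ p hp
    have h1 : c ⟨j + 1, by omega⟩ = true := force c hc (j + 1) (by omega) h3
    have hp4 : (p : ℕ) < j + 4 := p.isLt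
    rcases (by omega : (p : ℕ) = j + 1 ∨ (p : ℕ) = j + 2 ∨ (p : ℕ) = j + 3) with h | h | h
    · exact (congrArg c (Fin.ext h)).trans (h1.trans (decide_eq_true (by omega)).symm)
    · exact (congrArg c (Fin.ext h)).trans (h2.trans (decide_eq_true (by omega)).symm)
    · exact (congrArg c (Fin.ext h)).trans (h3.trans (decide_eq_false (by omega)).symm)
  · intro hq
    exact ⟨(hq ⟨j + 3, by omega⟩ (show j + 1 ≤ j + 3 by omega)).trans
        (decide_eq_false (show ¬(j + 3 ≤ j + 1 + 1) by omega)),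
      (hq ⟨j + 2, by omega⟩ (show j + 1 ≤ j + 2 by omega)).trans
        (decide_eq_true (show j + 2 ≤ j + 1 + 1 by omega))⟩

lemma lemB (j : ℕ) : (((RC (j + 3 + 1)).filter (fun c => c ⟨j + 3, by omega⟩ = false)).filter
    (fun c : Fin (j + 3 + 1) → Bool => ¬ c ⟨j + 2, by omega⟩ = true)).card = N j := by
  rw [Finset.filter_filter, ← master j (j + 4) (by omega) (by omega)]
  refine congrArg Finset.card (Finset.filter_congr ?_)
  intro c hc
  simp only [RC, Finset.mem_filter, Finset.mem_univ, true_and] at hc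
  constructor
  · rintro ⟨h3, h2'⟩ p hp
    have h2 : c ⟨j + 2, by omega⟩ = false := by
      revert h2'; cases c ⟨j + 2, by omega⟩ <;> simp
    have h1 : c ⟨j + 1, by omega⟩ = true := force c hc (j + 1) (by omega) h3
    have h0 : c ⟨j, by omega⟩ = true := force c hc j (by omega) h2
    have hp4 : (p : ℕ) < j + 4 := p.isLt
    rcases (by omega :
        (p : ℕ) = j ∨ (p : ℕ) = j + 1 ∨ (p : ℕ) = j + 2 ∨ (p : ℕ) = j + 3) with
      h | h | h | h
    · exact (congrArg c (Fin.ext h)).trans (h0.trans (decide_eq_true (by omega)).symm)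
    · exact (congrArg c (Fin.ext h)).trans (h1.trans (decide_eq_true (by omega)).symm)
    · exact (congrArg c (Fin.ext h)).trans (h2.trans (decide_eq_false (by omega)).symm)
    · exact (congrArg c (Fin.ext h)).trans (h3.trans (decide_eq_false (by omega)).symm)
  · intro hq
    refine ⟨(hq ⟨j + 3, by omega⟩ (show j ≤ j + 3 by omega)).trans
        (decide_eq_false (show ¬(j + 3 ≤ j + 1) by omega)), ?_⟩
    rw [(hq ⟨j + 2, by omega⟩ (show j ≤ j + 2 by omega)).trans
        (decide_eq_false (show ¬(j + 2 ≤ j + 1) by omega))]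
    simp

lemma lemC (j : ℕ) : ((RC (j + 3 + 2)).filter (fun c =>
    c ⟨j + 3 + 1, by omega⟩ = false ∧ c ⟨j + 3, by omega⟩ = false)).card = N (j + 1) := by
  rw [← master (j + 1) (j + 5) (by omega) (by omega)]
  refine congrArg Finset.card (Finset.filter_congr ?_)
  intro c hc
  simp only [RC, Finset.mem_filter, Finset.mem_univ, true_and] at hc
  constructor
  · rintro ⟨h4, h3⟩ p hp
    have h2 : c ⟨j + 2, by omega⟩ = true := force c hc (j + 2) (by omega) h4
    have h1 : c ⟨j + 1, by omega⟩ = true := force c hc (j + 1) (by omega) h3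
    have hp5 : (p : ℕ) < j + 5 := p.isLt
    rcases (by omega :
        (p : ℕ) = j + 1 ∨ (p : ℕ) = j + 2 ∨ (p : ℕ) = j + 3 ∨ (p : ℕ) = j + 4) with
      h | h | h | h
    · exact (congrArg c (Fin.ext h)).trans (h1.trans (decide_eq_true (by omega)).symm)
    · exact (congrArg c (Fin.ext h)).trans (h2.trans (decide_eq_true (by omega)).symm)
    · exact (congrArg c (Fin.ext h)).trans (h3.trans (decide_eq_false (by omega)).symm)
    · exact (congrArg c (Fin.ext h)).trans (h4.trans (decide_eq_false (by omega)).symm)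
  · intro hq
    exact ⟨(hq ⟨j + 4, by omega⟩ (show j + 1 ≤ j + 4 by omega)).trans
        (decide_eq_false (show ¬(j + 4 ≤ j + 1 + 1) by omega)),
      (hq ⟨j + 3, by omega⟩ (show j + 1 ≤ j + 3 by omega)).trans
        (decide_eq_false (show ¬(j + 3 ≤ j + 1 + 1) by omega))⟩

/-- Contribution counts used in the encoding-decoding rule, for `i ≥ 3`:
codewords of `RC (i+1)` with left-most bit `0` number `N (i-2) + N (i-3)`;
codewords of `RC (i+2)` with left-most two bits `00` number `N (i-2)`;
codewords of `RC (i+3)` beginning with `000`, resp. `010`, from the left number `0`. -/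
theorem stmt7 (i : ℕ) (hi : 3 ≤ i) :
    ((RC (i + 1)).filter (fun c => c ⟨i, by omega⟩ = false)).card = N (i - 2) + N (i - 3) ∧
    ((RC (i + 2)).filter (fun c =>
      c ⟨i + 1, by omega⟩ = false ∧ c ⟨i, by omega⟩ = false)).card = N (i - 2) ∧
    ((RC (i + 3)).filter (fun c =>
      c ⟨i + 2, by omega⟩ = false ∧ c ⟨i + 1, by omega⟩ = false ∧
        c ⟨i, by omega⟩ = false)).card = 0 ∧
    ((RC (i + 3)).filter (fun c =>
      c ⟨i + 2, by omega⟩ = false ∧ c ⟨i + 1, by omega⟩ = true ∧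
        c ⟨i, by omega⟩ = false)).card = 0 := by
  obtain ⟨j, rfl⟩ : ∃ j, i = j + 3 := ⟨i - 3, by omega⟩
  have e1 : j + 3 - 2 = j + 1 := rfl
  have e2 : j + 3 - 3 = j := rfl
  refine ⟨?_, ?_, ?_, ?_⟩
  · -- part 1
    rw [e1, e2, ← lemA j, ← lemB j]
    exact (Finset.card_filter_add_card_filter_not
      (p := fun c : Fin (j + 3 + 1) → Bool => c ⟨j + 2, by omega⟩ = true)).symm
  · -- part 2
    rw [e1]
    exact lemC j
  · -- part 3
    rw [Finset.card_eq_zero, Finset.filter_eq_empty_iff]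
    intro c hc
    simp only [RC, Finset.mem_filter, Finset.mem_univ, true_and] at hc
    rintro ⟨h1, -, h3⟩
    exact hc ⟨j + 3, by omega⟩ ⟨j + 3 + 2, by omega⟩ rfl ⟨h3, h1⟩
  · -- part 4
    rw [Finset.card_eq_zero, Finset.filter_eq_empty_iff]
    intro c hc
    simp only [RC, Finset.mem_filter, Finset.mem_univ, true_and] at hc
    rintro ⟨h1, -, h3⟩
    exact hc ⟨j + 3, by omega⟩ ⟨j + 3 + 2, by omega⟩ rfl ⟨h3, h1⟩
end

section
/- Let m ≥ 1 and let c = c_{m−1} ⋯ c_0 ∈ A_m with a_i ∈ {0, 1} the integer value of bit c_i, and with the conventions a_m := 0 and N_A(−1) := 1, where N_A(k) = |A_k|. Then the lexicographic index of c in A_m satisfies g(c) = Σ_{i=0}^{m−1} a_i N_A(i − a_{i+1}). -/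
/-- The constraint defining `A_m`: no index `i` with `i + 2 ≤ m - 1` such that
`c i = 1` and `c (i+2) = 1` (avoiding the substrings `101` and `111`). -/
def Aok (m : ℕ) (c : Fin m → Bool) : Prop :=
  ∀ i j : Fin m, (j : ℕ) = (i : ℕ) + 2 → ¬(c i = true ∧ c j = true)

instance (m : ℕ) : DecidablePred (Aok m) := fun c => by
  unfold Aok; infer_instance

/-- `A_m`: all binary words of length `m` with no two `1`'s at distance exactly `2`. -/
def A (m : ℕ) : Finset (Fin m → Bool) := Finset.univ.filter (Aok m)

/-- `N_A m = |A_m|`. -/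
def NA (m : ℕ) : ℕ := (A m).card

/-- `N_A` extended to integer arguments with the convention `N_A (-1) = 1`. -/
def NAi : ℤ → ℕ := fun k => if 0 ≤ k then NA k.toNat else 1

/-- The integer value `a_i` of bit `c_i`, with the convention `a_m = 0`
(indeed `a_i = 0` for every out-of-range index). -/
def aext (m : ℕ) (c : Fin m → Bool) (i : ℕ) : ℤ :=
  if h : i < m then (if c ⟨i, h⟩ = true then 1 else 0) else 0

/-- The lexicographic index of `c` in `A_m`: the number of codewords strictly smaller. -/
def gA (m : ℕ) (c : Fin m → Bool) : ℕ := ((A m).filter (fun c' => lexLt c' c)).card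

namespace Stmt9Aux

lemma mem_A_iff {m : ℕ} (c : Fin m → Bool) : c ∈ A m ↔ Aok m c := by
  simp [A]

lemma aext_fin {m : ℕ} (c : Fin m → Bool) (k : Fin m) :
    aext m c (k : ℕ) = if c k = true then 1 else 0 := by
  unfold aext
  rw [dif_pos k.isLt]

lemma aext_zero_or_one {m : ℕ} (c : Fin m → Bool) (t : ℕ) :
    aext m c t = 0 ∨ aext m c t = 1 := by
  unfold aext; split_ifs <;> simp

lemma aext_eq_one_iff {m : ℕ} (c : Fin m → Bool) (t : ℕ) :
    aext m c t = 1 ↔ ∃ h : t < m, c ⟨t, h⟩ = true := by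
  unfold aext
  split_ifs with h h2
  · simpa using ⟨h, h2⟩
  · simp only [Bool.not_eq_true] at h2
    constructor
    · intro habs; omega
    · rintro ⟨_, hh⟩; rw [h2] at hh; exact absurd hh (by simp)
  · constructor
    · intro habs; omega
    · rintro ⟨hlt, _⟩; exact absurd hlt h

/-- `snoc` with a `false` top bit, concrete version. -/
def snocF {n : ℕ} (e : Fin n → Bool) : Fin (n + 1) → Bool :=
  fun i => if h : (i : ℕ) < n then e ⟨i, h⟩ else false

lemma aok_restrict {n : ℕ} {d : Fin (n + 1) → Bool} (h : Aok (n + 1) d) :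
    Aok n (fun i : Fin n => d ⟨i, Nat.lt_succ_of_lt i.isLt⟩) := by
  intro i j hij hcon
  exact h ⟨i, Nat.lt_succ_of_lt i.isLt⟩ ⟨j, Nat.lt_succ_of_lt j.isLt⟩ hij hcon

lemma aok_snocF {n : ℕ} {e : Fin n → Bool} (h : Aok n e) : Aok (n + 1) (snocF e) := by
  intro i j hij hcon
  obtain ⟨hci, hcj⟩ := hcon
  by_cases hj : (j : ℕ) < n
  · have hi : (i : ℕ) < n := by omega
    simp only [snocF, dif_pos hi] at hci
    simp only [snocF, dif_pos hj] at hcj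
    exact h ⟨i, hi⟩ ⟨j, hj⟩ hij ⟨hci, hcj⟩
  · simp only [snocF, dif_neg hj] at hcj
    exact absurd hcj (by simp)

/-- Lemma A: the number of words in `A (n+1)` with top bit `0` equals `NA n`. -/
lemma card_top_false (n : ℕ) :
    ((A (n + 1)).filter (fun d => d ⟨n, Nat.lt_succ_self n⟩ = false)).card = NA n := by
  rw [NA]
  apply Finset.card_bij'
    (i := fun d _ => (fun i : Fin n => d ⟨i, Nat.lt_succ_of_lt i.isLt⟩))
    (j := fun e _ => snocF e)
  · intro d hd
    rw [Finset.mem_filter] at hd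
    rw [mem_A_iff]
    exact aok_restrict ((mem_A_iff d).mp hd.1)
  · intro e he
    rw [Finset.mem_filter]
    refine ⟨(mem_A_iff _).mpr (aok_snocF ((mem_A_iff e).mp he)), ?_⟩
    simp [snocF]
  · intro d hd
    rw [Finset.mem_filter] at hd
    funext i
    simp only [snocF]
    split_ifs with h
    · rfl
    · have : (i : ℕ) = n := by omega
      have : i = (⟨n, Nat.lt_succ_self n⟩ : Fin (n + 1)) := by
        apply Fin.ext; exact this
      rw [this, hd.2]
  · intro e _
    funext i
    simp only [snocF, dif_pos i.isLt]

lemma NA_zero : NA 0 = 1 := by decide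

section Main

variable {m : ℕ} (c : Fin m → Bool)

/-- Extend a short word `d` (positions `< k`) into a word of length `m` with bit `k = 0`
and the bits above `k` copied from `c`. -/
def extW (k : Fin m) (d : Fin (k : ℕ) → Bool) : Fin m → Bool :=
  fun i => if h : (i : ℕ) < (k : ℕ) then d ⟨i, h⟩
           else if (i : ℕ) = (k : ℕ) then false else c i

/-- Restriction to the lower `k` bits. -/
def resW (k : Fin m) (c' : Fin m → Bool) : Fin (k : ℕ) → Bool :=
  fun i => c' ⟨i, i.isLt.trans k.isLt⟩

/-- The set of codewords strictly below `c` having `k` as their first disagreement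
position. -/
def Sset (k : Fin m) : Finset (Fin m → Bool) :=
  (A m).filter (fun c' => c' k = false ∧ c k = true ∧ ∀ j : Fin m, k < j → c' j = c j)

/-- The target set of short words. -/
def Tset (k : Fin m) : Finset (Fin (k : ℕ) → Bool) :=
  (A (k : ℕ)).filter
    (fun d => aext m c ((k : ℕ) + 1) = 1 →
      ∀ i : Fin (k : ℕ), (i : ℕ) + 1 = (k : ℕ) → d i = false)

lemma card_Sset (hc : Aok m c) (k : Fin m) (hck : c k = true) :
    (Sset c k).card = (Tset c k).card := by
  apply Finset.card_bij' (i := fun c' _ => resW k c') (j := fun d _ => extW c k d)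
  · -- resW maps Sset into Tset
    intro c' hc'
    rw [Sset, Finset.mem_filter] at hc'
    obtain ⟨hA, hk0, _, hagree⟩ := hc'
    have hok : Aok m c' := (mem_A_iff c').mp hA
    rw [Tset, Finset.mem_filter]
    constructor
    · rw [mem_A_iff]
      intro i j hij hcon
      exact hok ⟨i, i.isLt.trans k.isLt⟩ ⟨j, j.isLt.trans k.isLt⟩ hij hcon
    · intro h1 i hi1
      obtain ⟨hlt, hctrue⟩ := (aext_eq_one_iff c ((k : ℕ) + 1)).mp h1
      have hc'k1 : c' ⟨(k : ℕ) + 1, hlt⟩ = true := by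
        rw [hagree ⟨(k : ℕ) + 1, hlt⟩ (by simp [Fin.lt_def]), hctrue]
      have := hok ⟨i, i.isLt.trans k.isLt⟩ ⟨(k : ℕ) + 1, hlt⟩ (by simp; omega)
      simp only [resW]
      rcases Bool.eq_false_or_eq_true (c' ⟨i, i.isLt.trans k.isLt⟩) with h | h
      · exact absurd ⟨h, hc'k1⟩ this
      · exact h
  · -- extW maps Tset into Sset
    intro d hd
    rw [Tset, Finset.mem_filter] at hd
    obtain ⟨hA, hcond⟩ := hd
    have hok : Aok (k : ℕ) d := (mem_A_iff d).mp hA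
    rw [Sset, Finset.mem_filter]
    refine ⟨?_, ?_, hck, ?_⟩
    · rw [mem_A_iff]
      intro i j hij hcon
      obtain ⟨hci, hcj⟩ := hcon
      by_cases hjk : (j : ℕ) < (k : ℕ)
      · have hik : (i : ℕ) < (k : ℕ) := by omega
        simp only [extW, dif_pos hjk] at hcj
        simp only [extW, dif_pos hik] at hci
        exact hok ⟨i, hik⟩ ⟨j, hjk⟩ hij ⟨hci, hcj⟩
      · by_cases hjk2 : (j : ℕ) = (k : ℕ)
        · simp only [extW, dif_neg hjk, if_pos hjk2] at hcj
          exact absurd hcj (by simp)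
        · -- j > k
          by_cases hik : (i : ℕ) < (k : ℕ)
          · -- then j = i + 2 > k and j ≠ k, so j = k + 1 and i = k - 1
            have hjk1 : (j : ℕ) = (k : ℕ) + 1 := by omega
            have hi1 : (i : ℕ) + 1 = (k : ℕ) := by omega
            simp only [extW, dif_neg hjk, if_neg hjk2] at hcj
            have haext : aext m c ((k : ℕ) + 1) = 1 := by
              rw [aext_eq_one_iff]
              refine ⟨by omega, ?_⟩
              have : (⟨(k : ℕ) + 1, by omega⟩ : Fin m) = j := by
                apply Fin.ext; simp [hjk1]
              rw [this]; exact hcj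
            have := hcond haext ⟨i, hik⟩ hi1
            simp only [extW, dif_pos hik] at hci
            rw [this] at hci
            exact absurd hci (by simp)
          · by_cases hik2 : (i : ℕ) = (k : ℕ)
            · simp only [extW, dif_neg hik, if_pos hik2] at hci
              exact absurd hci (by simp)
            · simp only [extW, dif_neg hik, if_neg hik2] at hci
              simp only [extW, dif_neg hjk, if_neg hjk2] at hcj
              exact hc i j hij ⟨hci, hcj⟩
    · simp [extW]
    · intro j hj
      have h1 : ¬ ((j : ℕ) < (k : ℕ)) := by
        rw [Fin.lt_def] at hj; omega
      have h2 : ¬ ((j : ℕ) = (k : ℕ)) := by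
        rw [Fin.lt_def] at hj; omega
      simp [extW, h1, h2]
  · -- left inverse
    intro c' hc'
    rw [Sset, Finset.mem_filter] at hc'
    obtain ⟨_, hk0, _, hagree⟩ := hc'
    funext i
    simp only [extW, resW]
    split_ifs with h1 h2
    · rfl
    · have : i = k := by apply Fin.ext; exact h2
      rw [this, hk0]
    · exact (hagree i (by rw [Fin.lt_def]; omega)).symm
  · -- right inverse
    intro d _
    funext i
    simp only [extW, resW, dif_pos i.isLt]

lemma card_top_false' (t : ℕ) (ht : 1 ≤ t) :
    ((A t).filter (fun d => d ⟨t - 1, by omega⟩ = false)).card = NA (t - 1) := by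
  obtain ⟨n, rfl⟩ : ∃ n, t = n + 1 := ⟨t - 1, by omega⟩
  exact card_top_false n

lemma card_Tset (k : Fin m) :
    (Tset c k).card = NAi ((k : ℤ) - aext m c ((k : ℕ) + 1)) := by
  rcases aext_zero_or_one c ((k : ℕ) + 1) with h | h
  · rw [h]
    have hts : Tset c k = A (k : ℕ) := by
      rw [Tset]
      apply Finset.filter_true_of_mem
      intro d _ habs
      rw [h] at habs
      exact absurd habs (by norm_num)
    rw [hts, NAi, sub_zero, if_pos (Int.natCast_nonneg _), Int.toNat_natCast]
    rw [NA]
  · rw [h]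
    by_cases hk0 : (k : ℕ) = 0
    · have hts : Tset c k = A (k : ℕ) := by
        rw [Tset]
        apply Finset.filter_true_of_mem
        intro d _ _ i
        exact absurd i.isLt (by omega)
      have hkz : ((k : ℕ) : ℤ) = 0 := by exact_mod_cast hk0
      have hNAi : NAi ((k : ℤ) - 1) = 1 := by
        rw [NAi, if_neg (by omega)]
      rw [hts, hNAi, hk0]
      have := NA_zero
      rwa [NA] at this
    · have hk1 : 1 ≤ (k : ℕ) := by omega
      have hts : Tset c k =
          (A (k : ℕ)).filter (fun d => d ⟨(k : ℕ) - 1, by omega⟩ = false) := by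
        rw [Tset]
        apply Finset.filter_congr
        intro d _
        constructor
        · intro hcc
          exact hcc h ⟨(k : ℕ) - 1, by omega⟩ (by show (k : ℕ) - 1 + 1 = (k : ℕ); omega)
        · intro hdn _ i hi
          have : i = ⟨(k : ℕ) - 1, by omega⟩ := by
            apply Fin.ext; show (i : ℕ) = (k : ℕ) - 1; omega
          rw [this]; exact hdn
      rw [hts, card_top_false' (k : ℕ) hk1]
      rw [NAi, if_pos (by omega : (0:ℤ) ≤ ((k:ℕ) : ℤ) - 1)]
      have harg : (((k:ℕ) : ℤ) - 1).toNat = (k : ℕ) - 1 := by omega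
      rw [harg]

lemma Sset_disjoint (k1 k2 : Fin m) (hne : k1 ≠ k2) :
    Disjoint (Sset c k1) (Sset c k2) := by
  rw [Finset.disjoint_left]
  intro c' h1 h2
  rw [Sset, Finset.mem_filter] at h1 h2
  obtain ⟨_, hk10, hck1, hag1⟩ := h1
  obtain ⟨_, hk20, hck2, hag2⟩ := h2
  rcases lt_trichotomy k1 k2 with h | h | h
  · have := hag1 k2 h
    rw [hk20] at this
    rw [← this] at hck2
    exact absurd hck2 (by simp)
  · exact hne h
  · have := hag2 k1 h
    rw [hk10] at this
    rw [← this] at hck1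
    exact absurd hck1 (by simp)

lemma filter_lexLt_eq :
    (A m).filter (fun c' => lexLt c' c) = Finset.univ.biUnion (Sset c) := by
  ext c'
  rw [Finset.mem_filter, Finset.mem_biUnion]
  constructor
  · rintro ⟨hA, k, hk⟩
    exact ⟨k, Finset.mem_univ k, by rw [Sset, Finset.mem_filter]; exact ⟨hA, hk⟩⟩
  · rintro ⟨k, _, hk⟩
    rw [Sset, Finset.mem_filter] at hk
    exact ⟨hk.1, k, hk.2⟩

lemma card_Sset_false (k : Fin m) (hck : c k = false) : (Sset c k).card = 0 := by
  rw [Finset.card_eq_zero]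
  apply Finset.filter_false_of_mem
  intro c' _
  intro hcon
  rw [hck] at hcon
  exact absurd hcon.2.1 (by simp)

end Main

end Stmt9Aux

open Stmt9Aux in
/-- The encoding-decoding rule for `A_m`: `g(c) = Σ_{i=0}^{m-1} a_i N_A(i - a_{i+1})`. -/
theorem stmt9 (m : ℕ) (hm : 1 ≤ m) (c : Fin m → Bool) (hc : c ∈ A m) :
    (gA m c : ℤ) =
      ∑ i : Fin m, aext m c i * (NAi ((i : ℤ) - aext m c ((i : ℕ) + 1)) : ℤ) := by
  have hok : Aok m c := (mem_A_iff c).mp hc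
  have hcard : gA m c = ∑ k : Fin m, (Sset c k).card := by
    rw [gA, filter_lexLt_eq c, Finset.card_biUnion]
    intro x _ y _ hxy
    exact Sset_disjoint c x y hxy
  rw [hcard]
  push_cast
  apply Finset.sum_congr rfl
  intro k _
  rcases hck : c k with hf | ht
  · rw [aext_fin, hck]
    simp [card_Sset_false c k hck]
  · rw [aext_fin, hck]
    rw [card_Sset c hok k hck, card_Tset c k]
    simp
end

section
/- Let p ≥ 2, q = 2^p, and let l₁, l₂, l₃ ∈ {0, …, q−1} be three consecutive charge levels with left-most page bits b_t = bit p−1 of map(l_t). If the level pattern (l₁, l₂, l₃) belongs to L_q (i.e., l₁ ≥ q/2, l₃ ≥ q/2, and l₂ < min(l₁, l₃)), then b₁ = 0 and b₃ = 0, so that b₁ b₂ b₃ ∈ {000, 010}. Consequently, if the binary sequence written on the left-most page contains no two 0's at distance exactly 2 (avoids 000 and 010), then no three consecutive levels form a pattern in L_q, regardless of the data on the other p−1 pages. -/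
/-- The recursive alternate Gray mapping: `map(v) = (2^p - 1) XOR (v XOR ⌊v/2⌋)`,
the bitwise complement of the standard binary reflected Gray code. -/
def ragm (p v : ℕ) : ℕ := (2 ^ p - 1) ^^^ (v ^^^ (v / 2))

/-- For a level in the upper half `[2^(p-1), 2^p)`, the left-most page bit
(bit `p-1` of `ragm p l`) is `0`. -/
lemma ragm_top_bit_false (p l : ℕ) (hp : 1 ≤ p) (h1 : l < 2 ^ p) (h2 : 2 ^ (p-1) ≤ l) :
    Nat.testBit (ragm p l) (p - 1) = false := by
  unfold ragm
  rw [Nat.testBit_xor, Nat.testBit_xor]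
  have hm : Nat.testBit (2 ^ p - 1) (p - 1) = true := by
    rw [Nat.testBit_two_pow_sub_one]; simpa using Nat.sub_lt (by omega) one_pos
  have hdiv : l / 2 ^ (p - 1) = 1 := by
    have h3 : 2 ^ p = 2 * 2 ^ (p-1) := by
      rw [← pow_succ']; congr 1; omega
    have h4 : 0 < 2 ^ (p-1) := Nat.pow_pos (by norm_num)
    rw [Nat.div_eq_of_lt_le] <;> omega
  have hlt : Nat.testBit l (p - 1) = true := by
    rw [Nat.testBit_eq_decide_div_mod_eq, hdiv]; simp
  have hd2 : Nat.testBit (l / 2) (p - 1) = false := by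
    rw [← Nat.testBit_succ]
    have : p - 1 + 1 = p := by omega
    rw [Nat.succ_eq_add_one, this]
    exact Nat.testBit_lt_two_pow h1
  rw [hm, hlt, hd2]
  rfl

/-- If a pattern of three consecutive levels `(l₁, l₂, l₃)` is in `L_q` (with `q = 2^p`),
then the left-most page bits of `l₁` and `l₃` are both `0`; consequently, if the left-most
page sequence has no two `0`'s at distance exactly `2`, then no three consecutive levels
form a pattern in `L_q`, regardless of the data on the other pages. -/
theorem stmt15 (p : ℕ) (hp : 2 ≤ p) :
    (∀ l1 l2 l3 : ℕ, l1 < 2 ^ p → l2 < 2 ^ p → l3 < 2 ^ p →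
      2 ^ (p - 1) ≤ l1 → 2 ^ (p - 1) ≤ l3 → l2 < min l1 l3 →
      Nat.testBit (ragm p l1) (p - 1) = false ∧
        Nat.testBit (ragm p l3) (p - 1) = false) ∧
    (∀ lev : ℕ → ℕ, (∀ n, lev n < 2 ^ p) →
      (∀ n, ¬(Nat.testBit (ragm p (lev n)) (p - 1) = false ∧
              Nat.testBit (ragm p (lev (n + 2))) (p - 1) = false)) →
      ∀ n, ¬(2 ^ (p - 1) ≤ lev n ∧ 2 ^ (p - 1) ≤ lev (n + 2) ∧
              lev (n + 1) < min (lev n) (lev (n + 2)))) := by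
  constructor
  · intro l1 l2 l3 h1 h2 h3 hb1 hb3 _
    exact ⟨ragm_top_bit_false p l1 (by omega) h1 hb1,
           ragm_top_bit_false p l3 (by omega) h3 hb3⟩
  · intro lev hlt havoid n ⟨ha, hb, _⟩
    exact havoid n ⟨ragm_top_bit_false p (lev n) (by omega) (hlt n) ha,
                    ragm_top_bit_false p (lev (n+2)) (by omega) (hlt (n+2)) hb⟩
end

section
/- Under the RLL (0,1) constraint, the asymptotic probability of the symbol 0 in a uniformly random codeword is (5 − √5)/10 ≈ 0.2764 (and that of the symbol 1 is (5 + √5)/10 ≈ 0.7236): letting Z(m) = Σ_{c ∈ B_m} (number of 0's in c), we have lim_{m→∞} Z(m) / (m · |B_m|) = (5 − √5)/10. -/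
/-- The RLL (0,1) constraint: no two adjacent `0`'s (no substring `00`). -/
def RLL01 (m : ℕ) (c : Fin m → Bool) : Prop :=
  ∀ i j : Fin m, (j : ℕ) = (i : ℕ) + 1 → ¬(c i = false ∧ c j = false)

instance (m : ℕ) : DecidablePred (RLL01 m) := fun c => by
  unfold RLL01; infer_instance

/-- `B_m`: all binary words of length `m` satisfying the RLL (0,1) constraint. -/
def B (m : ℕ) : Finset (Fin m → Bool) := Finset.univ.filter (RLL01 m)

/-- `Z m`: the total number of `0`'s over all words of `B_m`. -/
def Z (m : ℕ) : ℕ := ∑ c ∈ B m, (Finset.univ.filter (fun i => c i = false)).card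

lemma rll_cons (m : ℕ) (b : Bool) (c : Fin m → Bool) :
    RLL01 (m+1) (Fin.cons b c) ↔
      RLL01 m c ∧ (b = false → ∀ i : Fin m, (i : ℕ) = 0 → c i = true) := by
  constructor
  · intro h
    constructor
    · intro i j hij
      have := h i.succ j.succ (by simp [Fin.val_succ, hij])
      simpa [Fin.cons_succ] using this
    · intro hb i hi
      have := h 0 i.succ (by simp [Fin.val_succ, hi])
      simp [Fin.cons_succ, Fin.cons_zero, hb] at this
      simpa using this
  · rintro ⟨h1, h2⟩ i j hij
    rcases Fin.eq_zero_or_eq_succ j with rfl | ⟨j', rfl⟩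
    · simp at hij
    rcases Fin.eq_zero_or_eq_succ i with rfl | ⟨i', rfl⟩
    · simp only [Fin.val_succ, Fin.val_zero] at hij
      have hj0 : (j' : ℕ) = 0 := by omega
      rintro ⟨hb, hc⟩
      simp only [Fin.cons_zero] at hb
      have := h2 hb j' hj0
      simp [Fin.cons_succ, this] at hc
    · simp only [Fin.val_succ] at hij
      have := h1 i' j' (by omega)
      simpa [Fin.cons_succ] using this

lemma mem_B_cons_true (m : ℕ) (c : Fin m → Bool) :
    Fin.cons true c ∈ B (m+1) ↔ c ∈ B m := by
  simp [B, Finset.mem_filter, rll_cons]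

lemma mem_B_cons2 (m : ℕ) (c : Fin m → Bool) :
    Fin.cons false (Fin.cons true c) ∈ B (m+2) ↔ c ∈ B m := by
  simp [B, Finset.mem_filter, rll_cons]

lemma B_split (m : ℕ) :
    B (m+2) = ((B (m+1)).image (fun c : Fin (m+1) → Bool => Fin.cons true c)) ∪
      ((B m).image (fun c => Fin.cons false (Fin.cons true c))) := by
  ext d
  simp only [Finset.mem_union, Finset.mem_image]
  constructor
  · intro hd
    have hrll : RLL01 (m+2) d := by simpa [B, Finset.mem_filter] using hd
    cases hb : d 0
    · right
      have h1 : d 1 = true := by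
        have := hrll 0 1 (by simp)
        cases h1 : d 1
        · exact absurd ⟨hb, h1⟩ this
        · rfl
      refine ⟨Fin.tail (Fin.tail d), ?_, ?_⟩
      · rw [← mem_B_cons2]
        have e : Fin.cons false (Fin.cons true (Fin.tail (Fin.tail d))) = d := by
          rw [← h1, ← hb]
          rw [show (d 1 : Bool) = Fin.tail d 0 from rfl]
          rw [Fin.cons_self_tail, Fin.cons_self_tail]
        rw [e]; exact hd
      · rw [← h1]
        rw [show (d 1 : Bool) = Fin.tail d 0 from rfl, ← hb]
        rw [Fin.cons_self_tail, Fin.cons_self_tail]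
    · left
      refine ⟨Fin.tail d, ?_, ?_⟩
      · rw [← mem_B_cons_true]
        have e : Fin.cons true (Fin.tail d) = d := by
          rw [← hb, Fin.cons_self_tail]
        rw [e]; exact hd
      · rw [← hb, Fin.cons_self_tail]
  · rintro (⟨c, hc, rfl⟩ | ⟨c, hc, rfl⟩)
    · exact (mem_B_cons_true _ _).2 hc
    · exact (mem_B_cons2 _ _).2 hc

lemma B_disj (m : ℕ) :
    Disjoint ((B (m+1)).image (fun c : Fin (m+1) → Bool => Fin.cons true c))
      ((B m).image (fun c : Fin m → Bool =>
        (Fin.cons false (Fin.cons true c) : Fin (m+2) → Bool))) := by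
  rw [Finset.disjoint_left]
  rintro d hd1 hd2
  simp only [Finset.mem_image] at hd1 hd2
  obtain ⟨c1, _, rfl⟩ := hd1
  obtain ⟨c2, _, he⟩ := hd2
  have := congrFun he 0
  simp [Fin.cons_zero] at this

lemma cons_inj' (m : ℕ) (b : Bool) :
    Function.Injective (fun c : Fin m → Bool => (Fin.cons b c : Fin (m+1) → Bool)) := by
  intro a a' h
  funext i
  have := congrFun h i.succ
  simpa [Fin.cons_succ] using this

lemma cons2_inj (m : ℕ) :
    Function.Injective (fun c : Fin m → Bool => (Fin.cons false (Fin.cons true c) : Fin (m+2) → Bool)) :=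
  (cons_inj' (m+1) false).comp (cons_inj' m true)

lemma card_B_rec (m : ℕ) : (B (m+2)).card = (B (m+1)).card + (B m).card := by
  rw [B_split, Finset.card_union_of_disjoint (B_disj m),
    Finset.card_image_of_injective _ (cons_inj' (m+1) true),
    Finset.card_image_of_injective _ (cons2_inj m)]

lemma card_B (m : ℕ) : (B m).card = Nat.fib (m+2) := by
  induction m using Nat.twoStepInduction with
  | zero => decide
  | one => decide
  | more m ih1 ih2 =>
    rw [card_B_rec, ih1, ih2, Nat.fib_add_two (n := m+2),
      show m+1+2 = m+2+1 by omega]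
    omega

def zeros {m : ℕ} (c : Fin m → Bool) : ℕ := (Finset.univ.filter (fun i => c i = false)).card

lemma zeros_cons (m : ℕ) (b : Bool) (c : Fin m → Bool) :
    zeros (Fin.cons b c : Fin (m+1) → Bool) = (bif b then 0 else 1) + zeros c := by
  unfold zeros
  rw [Finset.card_filter, Finset.card_filter, Fin.sum_univ_succ]
  simp only [Fin.cons_succ, Fin.cons_zero]
  cases b <;> simp

lemma Z_eq (m : ℕ) : Z m = ∑ c ∈ B m, zeros c := rfl

lemma Z_rec (m : ℕ) : Z (m+2) = Z (m+1) + Z m + (B m).card := by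
  rw [Z_eq, B_split, Finset.sum_union (B_disj m),
    Finset.sum_image (fun a _ b _ h => cons_inj' (m+1) true h),
    Finset.sum_image (fun a _ b _ h => cons2_inj m h)]
  simp only [zeros_cons, cond_true, cond_false, zero_add]
  rw [Finset.sum_add_distrib, ← Z_eq m, ← Z_eq (m+1), ← Finset.card_eq_sum_ones]
  ring

lemma Z_formula (m : ℕ) :
    5 * Z m + Nat.fib (m+1) = (m+1) * (Nat.fib m + Nat.fib (m+2)) := by
  induction m using Nat.twoStepInduction with
  | zero => decide
  | one => decide
  | more m ih1 ih2 =>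
    have h2 : Nat.fib (m+2) = Nat.fib m + Nat.fib (m+1) := Nat.fib_add_two
    have h3 : Nat.fib (m+3) = Nat.fib (m+1) + Nat.fib (m+2) := Nat.fib_add_two
    have h4 : Nat.fib (m+4) = Nat.fib (m+2) + Nat.fib (m+3) := Nat.fib_add_two
    have hz := Z_rec m
    have hcb := card_B m
    -- goal : 5 * Z (m+2) + fib (m+3) = (m+3) * (fib (m+2) + fib (m+4))
    have goal' : 5 * Z (m+2) + Nat.fib (m+2+1) = (m+2+1) * (Nat.fib (m+2) + Nat.fib (m+2+2)) := by
      rw [hz, hcb]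
      rw [show m+2+1 = m+3 by omega, show m+2+2 = m+4 by omega, h4, h3, h2]
      rw [show m+1+2 = m+3 by omega, h3, h2] at ih2
      nlinarith [ih1, ih2]
    exact goal'

open Filter Real

lemma fib_ratio_tendsto :
    Filter.Tendsto (fun m : ℕ => (Nat.fib m : ℝ) / (Nat.fib (m+2))) Filter.atTop
      (nhds ((3 - Real.sqrt 5) / 2)) := by
  set r : ℝ := goldenConj / goldenRatio with hr
  have hrabs : |r| < 1 := by
    rw [hr, abs_div, abs_of_pos goldenRatio_pos]
    rw [div_lt_one goldenRatio_pos]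
    have h1 : |goldenConj| < 1 := abs_lt.2 ⟨neg_one_lt_goldenConj, by linarith [goldenConj_neg]⟩
    linarith [one_lt_goldenRatio]
  have h0 : Filter.Tendsto (fun m : ℕ => r ^ m) Filter.atTop (nhds 0) :=
    tendsto_pow_atTop_nhds_zero_of_abs_lt_one hrabs
  have hden0 : goldenRatio ^ 2 - goldenConj ^ 2 * (0:ℝ) ≠ 0 := by
    rw [mul_zero, sub_zero]
    positivity
  have hg : Filter.Tendsto
      (fun m : ℕ => (1 - r ^ m) / (goldenRatio ^ 2 - goldenConj ^ 2 * r ^ m))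
      Filter.atTop (nhds ((1 - 0) / (goldenRatio ^ 2 - goldenConj ^ 2 * 0))) := by
    exact ((tendsto_const_nhds.sub h0)).div
      (tendsto_const_nhds.sub (tendsto_const_nhds.mul h0)) hden0
  have hval : (1 - 0) / (goldenRatio ^ 2 - goldenConj ^ 2 * (0:ℝ)) = (3 - Real.sqrt 5) / 2 := by
    have h5 : Real.sqrt 5 * Real.sqrt 5 = 5 := Real.mul_self_sqrt (by norm_num)
    rw [mul_zero, sub_zero, sub_zero, goldenRatio_sq]
    have hφ1 : goldenRatio + 1 ≠ 0 := by positivity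
    rw [div_eq_div_iff hφ1 (by norm_num : (2:ℝ) ≠ 0)]
    linear_combination h5 / 2
  rw [← hval]
  refine hg.congr fun m => ?_
  have ha : goldenRatio ^ m ≠ 0 := pow_ne_zero _ goldenRatio_ne_zero
  have hs : Real.sqrt 5 ≠ 0 := by positivity
  have hfib : (0:ℝ) < (Nat.fib (m+2) : ℝ) := by
    exact_mod_cast Nat.fib_pos.2 (by omega)
  have hD : goldenRatio ^ (m+2) - goldenConj ^ (m+2) ≠ 0 := by
    have : goldenRatio ^ (m+2) - goldenConj ^ (m+2) = Real.sqrt 5 * Nat.fib (m+2) := by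
      rw [Real.coe_fib_eq]
      field_simp
    rw [this]
    positivity
  have hrm : r ^ m = goldenConj ^ m / goldenRatio ^ m := div_pow _ _ _
  have hB : goldenRatio ^ 2 - goldenConj ^ 2 * (goldenConj ^ m / goldenRatio ^ m) ≠ 0 := by
    have he : goldenRatio ^ 2 - goldenConj ^ 2 * (goldenConj ^ m / goldenRatio ^ m)
        = (goldenRatio ^ (m+2) - goldenConj ^ (m+2)) / goldenRatio ^ m := by
      field_simp
      ring
    rw [he]
    exact div_ne_zero hD ha
  rw [hrm, Real.coe_fib_eq, Real.coe_fib_eq]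
  rw [div_div_div_cancel_right₀]
  rw [div_eq_div_iff hB hD]
  · field_simp
    ring
  · exact hs

lemma Z_cast (m : ℕ) :
    (Z m : ℝ) = (((m : ℝ) + 1) * ((Nat.fib m : ℝ) + (Nat.fib (m+2) : ℝ)) - (Nat.fib (m+1) : ℝ)) / 5 := by
  have h0 := Z_formula m
  have h : (5:ℝ) * Z m + (Nat.fib (m+1) : ℝ)
      = ((m : ℝ) + 1) * ((Nat.fib m : ℝ) + (Nat.fib (m+2) : ℝ)) := by
    exact_mod_cast congrArg (Nat.cast : ℕ → ℝ) h0
  linarith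

/-- Under the RLL (0,1) constraint, the asymptotic probability of the symbol `0` in a
uniformly random codeword is `(5 - √5)/10`. -/
theorem stmt18 :
    Filter.Tendsto (fun m : ℕ => (Z m : ℝ) / (m * (B m).card)) Filter.atTop
      (nhds ((5 - Real.sqrt 5) / 10)) := by
  have hfr := fib_ratio_tendsto
  have hone : Filter.Tendsto (fun m : ℕ => ((m:ℝ)+1)/m) Filter.atTop (nhds 1) := by
    have h := tendsto_one_div_atTop_nhds_zero_nat (𝕜 := ℝ)
    have h2 := (tendsto_const_nhds (x := (1:ℝ)) (f := Filter.atTop (α := ℕ))).add h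
    rw [add_zero] at h2
    refine h2.congr' ?_
    filter_upwards [Filter.eventually_ge_atTop 1] with m hm
    have hm0 : (m:ℝ) ≠ 0 := Nat.cast_ne_zero.2 (by omega)
    field_simp
  have hzero : Filter.Tendsto
      (fun m : ℕ => (Nat.fib (m+1) : ℝ)/(Nat.fib (m+2)) * (1/m)) Filter.atTop (nhds 0) := by
    apply squeeze_zero (g := fun m : ℕ => 1/(m:ℝ)) (fun m => by positivity) (fun m => ?_)
      tendsto_one_div_atTop_nhds_zero_nat
    have h1 : (Nat.fib (m+1):ℝ) ≤ (Nat.fib (m+2):ℝ) := by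
      exact_mod_cast Nat.fib_le_fib_succ
    have h2 : (Nat.fib (m+1):ℝ)/(Nat.fib (m+2)) ≤ 1 :=
      div_le_one_of_le₀ h1 (by positivity)
    calc (Nat.fib (m+1) : ℝ)/(Nat.fib (m+2)) * (1/m) ≤ 1 * (1/m) := by
          apply mul_le_mul_of_nonneg_right h2 (by positivity)
      _ = 1/m := one_mul _
  have hcomb : Filter.Tendsto
      (fun m : ℕ => (((m:ℝ)+1)/m * ((Nat.fib m : ℝ)/(Nat.fib (m+2)) + 1)
        - (Nat.fib (m+1) : ℝ)/(Nat.fib (m+2)) * (1/m)) / 5) Filter.atTop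
      (nhds ((1 * ((3 - Real.sqrt 5)/2 + 1) - 0)/5)) :=
    ((hone.mul (hfr.add tendsto_const_nhds)).sub hzero).div_const 5
  have hvv : (1 * (((3:ℝ) - Real.sqrt 5)/2 + 1) - 0)/5 = (5 - Real.sqrt 5)/10 := by ring
  rw [hvv] at hcomb
  refine hcomb.congr' ?_
  filter_upwards [Filter.eventually_ge_atTop 1] with m hm
  have hm0 : (m:ℝ) ≠ 0 := Nat.cast_ne_zero.2 (by omega)
  have hf : (Nat.fib (m+2):ℝ) ≠ 0 := by
    have : 0 < Nat.fib (m+2) := Nat.fib_pos.2 (by omega)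
    exact_mod_cast this.ne'
  rw [card_B, Z_cast]
  field_simp
end
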